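/- arXiv:2311.04110 — 6 statements merged into one kernel-verified Lean document; each statement's English description precedes it below -/
import Mathlib

section
/- For every τ ∈ ℍ, every z ∈ ℂ and every positive integer N, one has the distribution relation θ₀(Nz, Nτ) = ∏_{j=0}^{N−1} θ₀(z + j/N, τ). -/
noncomputable section

open Complex

/-- `e2 w = e^{2πi w}`. -/
def e2 (w : ℂ) : ℂ := Complex.exp (2 * (Real.pi : ℂ) * Complex.I * w)

/-- The theta function `θ₀(z,τ) = ∏_{n ≥ 0} (1 − e^{2πi(nτ+z)})(1 − e^{2πi((n+1)τ−z)})`. -/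
def theta0 (z τ : ℂ) : ℂ :=
  ∏' n : ℕ, (1 - e2 ((n : ℂ) * τ + z)) * (1 - e2 (((n : ℂ) + 1) * τ - z))

lemma e2_add (a b : ℂ) : e2 (a + b) = e2 a * e2 b := by
  simp only [e2, mul_add, Complex.exp_add]

lemma e2_nat_mul (n : ℕ) (w : ℂ) : e2 ((n : ℂ) * w) = e2 w ^ n := by
  rw [e2, e2, ← Complex.exp_nat_mul]
  ring_nf

lemma e2_neg (w : ℂ) : e2 (-w) = (e2 w)⁻¹ := by
  rw [e2, e2, ← Complex.exp_neg]
  ring_nf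

lemma norm_e2 (w : ℂ) : ‖e2 w‖ = Real.exp (-(2 * Real.pi * w.im)) := by
  rw [e2, Complex.norm_exp]
  congr 1
  simp [Complex.mul_re, Complex.mul_im]

/-- If one factor vanishes, the product has value `0`. -/
lemma hasProd_zero_of_exists_eq_zero' {f : ℕ → ℂ} (h : ∃ n, f n = 0) : HasProd f 0 := by
  obtain ⟨n0, hn0⟩ := h
  rw [HasProd]
  have hev : (fun _ : Finset ℕ => (0 : ℂ)) =ᶠ[Filter.atTop] fun s => ∏ i ∈ s, f i := by
    filter_upwards [Filter.eventually_ge_atTop {n0}] with s hs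
    exact (Finset.prod_eq_zero (hs (Finset.mem_singleton_self n0)) hn0).symm
  exact Filter.Tendsto.congr' hev tendsto_const_nhds

lemma multipliable_one_sub_mul_geom (c : ℂ) {q : ℂ} (hq : ‖q‖ < 1) :
    Multipliable (fun n : ℕ => 1 - c * q ^ n) := by
  by_cases h0 : ∃ n : ℕ, 1 - c * q ^ n = 0
  · exact ⟨0, hasProd_zero_of_exists_eq_zero' h0⟩
  · push_neg at h0
    have hsum : Summable (fun n : ℕ => Complex.log (1 - c * q ^ n)) := by
      have hgeom : Summable (fun n : ℕ => (3 / 2 : ℝ) * (‖c‖ * ‖q‖ ^ n)) :=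
        ((summable_geometric_of_lt_one (norm_nonneg q) hq).mul_left ‖c‖).mul_left _
      refine Summable.of_norm_bounded_eventually_nat hgeom ?_
      have htend : Filter.Tendsto (fun n : ℕ => ‖c‖ * ‖q‖ ^ n) Filter.atTop (nhds 0) := by
        simpa using (tendsto_pow_atTop_nhds_zero_of_norm_lt_one (by simpa using hq)).const_mul ‖c‖
      have hev : ∀ᶠ n : ℕ in Filter.atTop, ‖c‖ * ‖q‖ ^ n < 1 / 2 :=
        htend.eventually (Filter.Tendsto.eventually_lt_const (by norm_num) Filter.tendsto_id)
      filter_upwards [hev] with n hn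
      have hnorm : ‖-(c * q ^ n)‖ ≤ 1 / 2 := by
        rw [norm_neg, norm_mul, norm_pow]
        exact hn.le
      have hrw : (1 : ℂ) - c * q ^ n = 1 + -(c * q ^ n) := by ring
      calc ‖Complex.log (1 - c * q ^ n)‖
          = ‖Complex.log (1 + -(c * q ^ n))‖ := by rw [hrw]
        _ ≤ 3 / 2 * ‖-(c * q ^ n)‖ := Complex.norm_log_one_add_half_le_self hnorm
        _ = 3 / 2 * (‖c‖ * ‖q‖ ^ n) := by rw [norm_neg, norm_mul, norm_pow]
    exact Complex.multipliable_of_summable_log hsum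

/-- If `ζ` is a primitive `N`-th root of unity, `∏_{j<N} (1 - y ζ^j) = 1 - y^N`. -/
lemma prod_range_one_sub_mul_pow {N : ℕ} (hN : 0 < N) {ζ : ℂ} (hζ : IsPrimitiveRoot ζ N)
    (y : ℂ) : ∏ j ∈ Finset.range N, (1 - y * ζ ^ j) = 1 - y ^ N := by
  haveI : NeZero N := ⟨hN.ne'⟩
  have key := hζ.pow_sub_pow_eq_prod_sub_mul (x := (1 : ℂ)) (y := y) hN
  rw [one_pow] at key
  rw [key]
  refine Finset.prod_nbij (fun j => ζ ^ j) ?_ ?_ ?_ ?_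
  · intro j _
    rw [Polynomial.mem_nthRootsFinset hN, ← pow_mul, mul_comm, pow_mul, hζ.pow_eq_one, one_pow]
  · intro a ha b hb hab
    rw [Finset.coe_range, Set.mem_Iio] at ha hb
    exact hζ.pow_inj ha hb hab
  · intro μ hμ
    have hμ' : μ ^ N = 1 := by
      have : μ ∈ Polynomial.nthRootsFinset N (1 : ℂ) := hμ
      exact (Polynomial.mem_nthRootsFinset hN (1 : ℂ)).mp this
    obtain ⟨i, hi, hie⟩ := hζ.eq_pow_of_pow_eq_one hμ'
    exact ⟨i, by simpa using hi, hie⟩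
  · intro j _
    rw [mul_comm]

/-- Distribution relation: for `τ ∈ ℍ`, `z ∈ ℂ` and `N ≥ 1`,
`θ₀(Nz, Nτ) = ∏_{j=0}^{N−1} θ₀(z + j/N, τ)`. -/
theorem theta0_distribution (τ : ℂ) (hτ : 0 < τ.im) (z : ℂ) (N : ℕ) (hN : 0 < N) :
    theta0 ((N : ℂ) * z) ((N : ℂ) * τ) =
      ∏ j ∈ Finset.range N, theta0 (z + (j : ℂ) / (N : ℂ)) τ := by
  have hq : ‖e2 τ‖ < 1 := by
    rw [norm_e2, Real.exp_lt_one_iff]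
    have := Real.pi_pos
    nlinarith
  set ζ : ℂ := e2 (1 / (N : ℂ)) with hζdef
  have hζprim : IsPrimitiveRoot ζ N := by
    have h := Complex.isPrimitiveRoot_exp N hN.ne'
    have he : ζ = Complex.exp (2 * (Real.pi : ℂ) * Complex.I / (N : ℂ)) := by
      rw [hζdef, e2, mul_one_div]
    rw [he]
    exact h
  have hmult : ∀ j : ℕ, Multipliable (fun n : ℕ =>
      (1 - e2 ((n : ℂ) * τ + z) * ζ ^ j) * (1 - e2 (((n : ℂ) + 1) * τ - z) * ζ⁻¹ ^ j)) := by
    intro j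
    have hm := (multipliable_one_sub_mul_geom (e2 z * ζ ^ j) hq).mul
      (multipliable_one_sub_mul_geom (e2 (τ - z) * ζ⁻¹ ^ j) hq)
    refine hm.congr fun n => ?_
    rw [e2_add ((n : ℂ) * τ) z,
        show ((n : ℂ) + 1) * τ - z = (n : ℂ) * τ + (τ - z) by ring,
        e2_add ((n : ℂ) * τ) (τ - z), e2_nat_mul]
    ring
  calc theta0 ((N : ℂ) * z) ((N : ℂ) * τ)
      = ∏' n : ℕ, ((1 - e2 ((n : ℂ) * τ + z) ^ N) * (1 - e2 (((n : ℂ) + 1) * τ - z) ^ N)) := by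
        rw [theta0]
        apply tprod_congr
        intro n
        rw [show (n : ℂ) * ((N : ℂ) * τ) + (N : ℂ) * z = (N : ℂ) * ((n : ℂ) * τ + z) by ring,
            show ((n : ℂ) + 1) * ((N : ℂ) * τ) - (N : ℂ) * z
              = (N : ℂ) * (((n : ℂ) + 1) * τ - z) by ring,
            e2_nat_mul, e2_nat_mul]
    _ = ∏' n : ℕ, ∏ j ∈ Finset.range N,
          ((1 - e2 ((n : ℂ) * τ + z) * ζ ^ j) * (1 - e2 (((n : ℂ) + 1) * τ - z) * ζ⁻¹ ^ j)) := by
        apply tprod_congr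
        intro n
        rw [Finset.prod_mul_distrib,
            prod_range_one_sub_mul_pow hN hζprim (e2 ((n : ℂ) * τ + z)),
            prod_range_one_sub_mul_pow hN hζprim.inv (e2 (((n : ℂ) + 1) * τ - z))]
    _ = ∏ j ∈ Finset.range N, ∏' n : ℕ,
          ((1 - e2 ((n : ℂ) * τ + z) * ζ ^ j) * (1 - e2 (((n : ℂ) + 1) * τ - z) * ζ⁻¹ ^ j)) :=
        (Multipliable.tprod_finsetProd (fun j _ => hmult j))
    _ = ∏ j ∈ Finset.range N, theta0 (z + (j : ℂ) / (N : ℂ)) τ := by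
        refine Finset.prod_congr rfl fun j _ => ?_
        rw [theta0]
        refine (tprod_congr fun n => ?_).symm
        rw [show (n : ℂ) * τ + (z + (j : ℂ) / (N : ℂ))
              = ((n : ℂ) * τ + z) + (j : ℂ) * (1 / (N : ℂ)) by ring,
            show ((n : ℂ) + 1) * τ - (z + (j : ℂ) / (N : ℂ))
              = (((n : ℂ) + 1) * τ - z) + (-((j : ℂ) * (1 / (N : ℂ)))) by ring,
            e2_add ((n : ℂ) * τ + z), e2_add (((n : ℂ) + 1) * τ - z), e2_neg,
            e2_nat_mul, inv_pow, ← hζdef]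
end
end

section
/- Let λ ∈ L be admissible. Then there exists a unique primitive element a ∈ Λ = Hom_ℤ(L,ℤ) such that (i) the element det(a, εa, ·) of Λ^∨ = L is a nonzero multiple of λ, where εa denotes the dual action of multiplication by ε, and (ii) x ∈ U_a, where x = σ_ℂ|_L ∈ Hom_ℤ(L,ℂ). -/
noncomputable section

open scoped NumberField nonZeroDivisors

open scoped IntermediateField

variable (K : Type) [Field K] [NumberField K]

/-- The fractional ideal `L = 𝔣𝔟⁻¹`. -/
def Lfrac (𝔣 𝔟 : Ideal (𝓞 K)) : FractionalIdeal (𝓞 K)⁰ K :=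
  (𝔣 : FractionalIdeal (𝓞 K)⁰ K) * (𝔟 : FractionalIdeal (𝓞 K)⁰ K)⁻¹

/-- The fractional ideal `𝔞⁻¹L = 𝔞⁻¹𝔣𝔟⁻¹`. -/
def aInvL (𝔣 𝔟 𝔞 : Ideal (𝓞 K)) : FractionalIdeal (𝓞 K)⁰ K :=
  (𝔞 : FractionalIdeal (𝓞 K)⁰ K)⁻¹ * Lfrac K 𝔣 𝔟

/-- `λ ∈ L` is admissible if `λ ∈ N(𝔞)𝔞⁻¹L`, `λ ≡ q mod qL` and `λ ∉ N(𝔞)L`. -/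
def Admissible (𝔣 𝔟 𝔞 : Ideal (𝓞 K)) (q : ℕ) (lam : K) : Prop :=
  lam ∈ Lfrac K 𝔣 𝔟 ∧
  (Ideal.absNorm 𝔞 : K)⁻¹ * lam ∈ aInvL K 𝔣 𝔟 𝔞 ∧
  (q : K)⁻¹ * (lam - (q : K)) ∈ Lfrac K 𝔣 𝔟 ∧
  (Ideal.absNorm 𝔞 : K)⁻¹ * lam ∉ Lfrac K 𝔣 𝔟

/-- The determinant attached to the orientation of `K` induced by `(σ_ℝ, σ_ℂ)`:
`det3(u,v,w)` is the determinant of the matrix of coordinates of `u, v, w` under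
`K ⊗ ℝ ≅ ℝ × ℂ = ℝ³`. -/
def det3 (σR : K →+* ℝ) (σC : K →+* ℂ) (u v w : K) : ℝ :=
  Matrix.det !![σR u, (σC u).re, (σC u).im;
                σR v, (σC v).re, (σC v).im;
                σR w, (σC w).re, (σC w).im]

/-- A ℤ-valued functional on `K` is identified with an element of `Λ = Hom_ℤ(L,ℤ)` when it
takes integer values on `L`; it is primitive when the induced map `L → ℤ` is onto. -/
def IsPrimitiveOn (L : FractionalIdeal (𝓞 K)⁰ K) (a : K →ₗ[ℚ] ℚ) : Prop :=
  (∀ v : K, v ∈ L → ∃ n : ℤ, a v = (n : ℚ)) ∧ (∃ v : K, v ∈ L ∧ a v = 1)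

/-- `z ∈ U_a`: there is an oriented basis `(λ,μ)` of the plane `H(a) = ker a` (oriented
with respect to the orientation `det3` of `K`) with `Im(z(λ) conj(z(μ))) > 0`. -/
def memU (σR : K →+* ℝ) (σC : K →+* ℂ) (a : K →ₗ[ℚ] ℚ) (z : K →ₗ[ℚ] ℂ) : Prop :=
  ∃ lam mu : K, a lam = 0 ∧ a mu = 0 ∧ LinearIndependent ℚ ![lam, mu] ∧
    (∀ δ : K, 0 < a δ → 0 < det3 K σR σC lam mu δ) ∧
    0 < (z lam * (starRingEnd ℂ) (z mu)).im

/-- The complex embedding `σ_ℂ` restricted to `L`, viewed as the element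
`x ∈ Hom_ℤ(L, ℂ)` (equivalently, as a ℚ-linear map `K → ℂ`). -/
def xlin (σC : K →+* ℂ) : K →ₗ[ℚ] ℂ :=
  σC.toAddMonoidHom.toRatLinearMap

/-- The dual action of a unit `ε`: `(εa)(v) = a(ε⁻¹ v)`. -/
def epsDual (ε : (𝓞 K)ˣ) (a : K →ₗ[ℚ] ℚ) : K →ₗ[ℚ] ℚ :=
  a ∘ₗ LinearMap.mulLeft ℚ (algebraMap (𝓞 K) K ((ε⁻¹ : (𝓞 K)ˣ) : 𝓞 K))

section Helpers

variable {K}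

lemma det3_swap12 (σR : K →+* ℝ) (σC : K →+* ℂ) (u v w : K) :
    det3 K σR σC u v w = - det3 K σR σC v u w := by
  simp [det3, Matrix.det_fin_three]; ring

lemma det3_comb12 (σR : K →+* ℝ) (σC : K →+* ℂ) (u v w : K) (α β γ δ : ℚ) :
    det3 K σR σC (α•u + β•v) (γ•u + δ•v) w = (α*δ - β*γ) * det3 K σR σC u v w := by
  simp [det3, Matrix.det_fin_three, Rat.smul_def, map_add, map_mul, map_ratCast,
    Complex.add_re, Complex.add_im, Complex.mul_re, Complex.mul_im,
    Complex.ratCast_re, Complex.ratCast_im]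
  ring

lemma det3_comb3 (σR : K →+* ℝ) (σC : K →+* ℂ) (u v : K) (c₀ c₁ c₂ : ℚ) (p q r : K) :
    det3 K σR σC u v (c₀•p + c₁•q + c₂•r)
      = c₀ * det3 K σR σC u v p + c₁ * det3 K σR σC u v q + c₂ * det3 K σR σC u v r := by
  simp [det3, Matrix.det_fin_three, Rat.smul_def, map_add, map_mul, map_ratCast,
    Complex.add_re, Complex.add_im, Complex.mul_re, Complex.mul_im,
    Complex.ratCast_re, Complex.ratCast_im]
  ring

lemma det3_smul3 (σR : K →+* ℝ) (σC : K →+* ℂ) (u v : K) (c : ℚ) (w : K) :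
    det3 K σR σC u v (c•w) = c * det3 K σR σC u v w := by
  simp [det3, Matrix.det_fin_three, Rat.smul_def, map_add, map_mul, map_ratCast,
    Complex.add_re, Complex.add_im, Complex.mul_re, Complex.mul_im,
    Complex.ratCast_re, Complex.ratCast_im]
  ring

lemma det3_self1 (σR : K →+* ℝ) (σC : K →+* ℂ) (u v : K) :
    det3 K σR σC u v u = 0 := by
  simp [det3, Matrix.det_fin_three, Matrix.vecHead, Matrix.vecTail]; ring

lemma det3_self2 (σR : K →+* ℝ) (σC : K →+* ℂ) (u v : K) :
    det3 K σR σC u v v = 0 := by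
  simp [det3, Matrix.det_fin_three, Matrix.vecHead, Matrix.vecTail]; ring

lemma im_comb (u v : ℂ) (α β γ δ : ℚ) :
    (((α:ℂ)*u + (β:ℂ)*v) * (starRingEnd ℂ) ((γ:ℂ)*u + (δ:ℂ)*v)).im
      = (α*δ - β*γ) * (u * (starRingEnd ℂ) v).im := by
  simp only [map_add, map_mul, map_ratCast]
  simp [Complex.mul_im, Complex.mul_re, Complex.add_im, Complex.add_re,
    Complex.ratCast_re, Complex.ratCast_im, Complex.conj_re, Complex.conj_im]
  ring

lemma im_uwu (u w : ℂ) : (u * (starRingEnd ℂ) (w * u)).im = -((u.re^2 + u.im^2) * w.im) := by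
  simp [Complex.mul_im, Complex.mul_re, Complex.conj_re, Complex.conj_im]
  ring

lemma im_swap (u v : ℂ) : (u * (starRingEnd ℂ) v).im = -((v * (starRingEnd ℂ) u).im) := by
  simp [Complex.mul_im, Complex.conj_re, Complex.conj_im]
  ring

lemma det3_degenerate (σR : K →+* ℝ) (σC : K →+* ℂ) (lam e e' : K) (hee' : e * e' = 1)
    (him : (σC e').im = 0) : det3 K σR σC lam (e'*lam) (e*lam) = 0 := by
  set s : ℝ := (σC e').re with hsdef
  have hs : σC e' = (s:ℂ) := by
    apply Complex.ext <;> simp [him, hsdef]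
  have hprod : σC e * σC e' = 1 := by rw [← map_mul, hee', map_one]
  have hs0 : s ≠ 0 := by
    intro h
    rw [hs, h] at hprod
    simp at hprod
  have hse : σC e = ((s⁻¹ : ℝ) : ℂ) := by
    rw [hs] at hprod
    rw [Complex.ofReal_inv]
    have : (↑s : ℂ) ≠ 0 := by exact_mod_cast hs0
    field_simp at hprod ⊢
    linear_combination hprod
  simp only [det3, Matrix.det_fin_three, map_mul, hs, hse]
  simp [Matrix.vecHead, Matrix.vecTail, Complex.mul_re, Complex.mul_im,
    Complex.ofReal_re, Complex.ofReal_im]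
  field_simp
  ring

lemma det_embed (σR : K →+* ℝ) (σC : K →+* ℂ) (b : Fin 3 → K) (τ : Fin 3 → (K →ₐ[ℚ] ℂ))
    (h1 : ∀ x, τ 0 x = ((σR x : ℝ) : ℂ)) (h2 : ∀ x, τ 1 x = σC x)
    (h3 : ∀ x, τ 2 x = (starRingEnd ℂ) (σC x)) :
    Matrix.det (Matrix.of fun i j => τ j (b i))
      = ((det3 K σR σC (b 0) (b 1) (b 2) : ℝ) : ℂ) * (-2 * Complex.I) := by
  rw [Matrix.det_fin_three]
  simp only [Matrix.of_apply, h1, h2, h3, det3, Matrix.det_fin_three]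
  simp only [Matrix.cons_val', Matrix.cons_val_zero, Matrix.cons_val_one, Matrix.head_cons,
    Matrix.empty_val', Matrix.cons_val_fin_one, Matrix.head_fin_const, Matrix.vecHead,
    Matrix.vecTail]
  apply Complex.ext <;>
    simp [Complex.mul_re, Complex.mul_im, Complex.conj_re, Complex.conj_im,
      Complex.ofReal_re, Complex.ofReal_im, Complex.I_re, Complex.I_im] <;>
    ring

lemma rat_mul_den (q : ℚ) (n : ℕ) (h : q.den ∣ n) : ∃ z : ℤ, (n:ℚ) * q = z := by
  obtain ⟨k, hk⟩ := h
  refine ⟨q.num * k, ?_⟩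
  have hden : ((q.den : ℚ)) ≠ 0 := by exact_mod_cast q.den_ne_zero
  have h1 : (q.den : ℚ) * q = q.num := Rat.den_mul_eq_num q
  rw [hk]
  push_cast
  calc ((q.den : ℚ) * k) * q = ((q.den : ℚ) * q) * k := by ring
  _ = (q.num : ℚ) * k := by rw [h1]

end Helpers

set_option maxHeartbeats 4000000 in
/-- Lemma 2.2: for an admissible `λ ∈ L` there is a unique primitive `a ∈ Λ` such that
`det(a, εa, ·)` is a nonzero multiple of `λ` (equivalently, `a` and `εa` are linearly
independent and both vanish on `λ`) and `x = σ_ℂ|_L ∈ U_a`. -/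
theorem exists_unique_a
    (hdeg : Module.finrank ℚ K = 3)
    (σR : K →+* ℝ) (σC : K →+* ℂ) (hσC : ∃ x : K, (σC x).im ≠ 0)
    (𝔣 𝔟 𝔞 : Ideal (𝓞 K))
    (h𝔣bot : 𝔣 ≠ ⊥) (h𝔣top : 𝔣 ≠ ⊤) (h𝔟bot : 𝔟 ≠ ⊥)
    (h𝔣𝔟 : IsCoprime 𝔣 𝔟)
    (h𝔞N𝔣 : IsCoprime 𝔞 (Ideal.span {(Ideal.absNorm 𝔣 : 𝓞 K)}))
    (h𝔞prime : (Ideal.absNorm 𝔞).Prime) (h𝔞odd : Odd (Ideal.absNorm 𝔞))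
    (q : ℕ) (hq0 : 0 < q) (hq𝔣 : (q : 𝓞 K) ∈ 𝔣)
    (hqmin : ∀ m : ℕ, 0 < m → (m : 𝓞 K) ∈ 𝔣 → q ≤ m)
    -- the unit ε : generator of O_𝔣^{+,×} = O_K^× ∩ (1+𝔣), with 0 < σ_ℝ(ε) < 1
    (ε : (𝓞 K)ˣ)
    (hε𝔣 : (ε : 𝓞 K) - 1 ∈ 𝔣)
    (hεpos : 0 < σR (algebraMap (𝓞 K) K (ε : 𝓞 K)))
    (hεlt : σR (algebraMap (𝓞 K) K (ε : 𝓞 K)) < 1)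
    (hOfpos : ∀ u : (𝓞 K)ˣ, (u : 𝓞 K) - 1 ∈ 𝔣 → 0 < σR (algebraMap (𝓞 K) K (u : 𝓞 K)))
    (hεgen : ∀ u : (𝓞 K)ˣ, (u : 𝓞 K) - 1 ∈ 𝔣 → ∃ n : ℤ, u = ε ^ n)
    -- the admissible element
    (lam : K) (hlam : Admissible K 𝔣 𝔟 𝔞 q lam) :
    ∃! a : K →ₗ[ℚ] ℚ,
      IsPrimitiveOn K (Lfrac K 𝔣 𝔟) a ∧
      (a lam = 0 ∧ epsDual K ε a lam = 0 ∧
        LinearIndependent ℚ ![a, epsDual K ε a]) ∧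
      memU K σR σC a (xlin K σC) := by
  classical
  set e : K := algebraMap (𝓞 K) K (ε : 𝓞 K) with he_def
  set e' : K := algebraMap (𝓞 K) K ((ε⁻¹ : (𝓞 K)ˣ) : 𝓞 K) with he'_def
  have hee' : e * e' = 1 := by
    rw [he_def, he'_def, ← map_mul, Units.mul_inv, map_one]
  have he'e : e' * e = 1 := by rw [mul_comm]; exact hee'
  -- λ ≠ 0
  have hlam0 : lam ≠ 0 := by
    rintro rfl
    exact hlam.2.2.2 (by simpa using (Lfrac K 𝔣 𝔟).zero_mem)
  have he0 : e ≠ 0 := fun h => by simp [h] at hee'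
  have he'0 : e' ≠ 0 := fun h => by simp [h] at hee'
  -- ε is irrational
  have heQ : e ∉ (algebraMap ℚ K).range := by
    rintro ⟨c, hc⟩
    have hc0 : c ≠ 0 := by rintro rfl; rw [map_zero] at hc; exact he0 hc.symm
    have hci : IsIntegral ℤ c := by
      have h1 : IsIntegral ℤ e := NumberField.RingOfIntegers.isIntegral_coe _
      rw [← hc] at h1
      exact (isIntegral_algebraMap_iff (algebraMap ℚ K).injective).mp h1
    have hci' : IsIntegral ℤ c⁻¹ := by
      have h1 : IsIntegral ℤ e' := NumberField.RingOfIntegers.isIntegral_coe _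
      have h2 : e' = algebraMap ℚ K c⁻¹ := by
        rw [map_inv₀, hc]
        field_simp
        rw [mul_comm]
        exact hee'
      rw [h2] at h1
      exact (isIntegral_algebraMap_iff (algebraMap ℚ K).injective).mp h1
    obtain ⟨z, hz⟩ := IsIntegrallyClosed.isIntegral_iff.mp hci
    obtain ⟨w, hw⟩ := IsIntegrallyClosed.isIntegral_iff.mp hci'
    have hzw : z * w = 1 := by
      have : (z : ℚ) * (w : ℚ) = 1 := by
        rw [show ((z:ℤ):ℚ) = algebraMap ℤ ℚ z from rfl,
          show ((w:ℤ):ℚ) = algebraMap ℤ ℚ w from rfl, hz, hw]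
        field_simp
      exact_mod_cast this
    have hσRe : σR e = (c : ℝ) := by
      rw [← hc, show algebraMap ℚ K c = (c : K) from by norm_cast, map_ratCast]
    rcases Int.eq_one_or_neg_one_of_mul_eq_one hzw with h1 | h1
    · rw [h1] at hz
      have : c = 1 := by rw [← hz]; norm_num
      rw [this] at hσRe
      rw [hσRe] at hεlt
      norm_num at hεlt
    · rw [h1] at hz
      have : c = -1 := by rw [← hz]; norm_num
      rw [this] at hσRe
      rw [hσRe] at hεpos
      norm_num at hεpos
  -- the basis (λ, ε⁻¹λ, ελ)
  have hb_li : LinearIndependent ℚ ![lam, e' * lam, e * lam] := by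
    rw [Fintype.linearIndependent_iff]
    intro g hg
    rw [Fin.sum_univ_three] at hg
    simp only [Matrix.cons_val_zero, Matrix.cons_val_one, Matrix.head_cons,
      Matrix.cons_val_two, Matrix.tail_cons, Matrix.head_fin_const] at hg
    have hA : ((g 0 : K) + (g 1 : K) * e' + (g 2 : K) * e) * lam = 0 := by
      rw [Rat.smul_def, Rat.smul_def, Rat.smul_def] at hg
      linear_combination hg
    have hA' : (g 0 : K) + (g 1 : K) * e' + (g 2 : K) * e = 0 :=
      by rcases mul_eq_zero.mp hA with h | h; exact h; exact absurd h hlam0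
    have hquad : (g 2 : K) * e^2 + (g 0 : K) * e + (g 1 : K) = 0 := by
      linear_combination e * hA' - (g 1 : K) * hee'
    set P : Polynomial ℚ := Polynomial.C (g 2) * Polynomial.X^2
      + Polynomial.C (g 0) * Polynomial.X + Polynomial.C (g 1) with hP_def
    have haev : Polynomial.aeval e P = 0 := by
      rw [hP_def]
      simp only [map_add, map_mul, map_pow, Polynomial.aeval_C, Polynomial.aeval_X]
      rw [show (algebraMap ℚ K) (g 2) = ((g 2 : ℚ) : K) from by norm_cast,
        show (algebraMap ℚ K) (g 0) = ((g 0 : ℚ) : K) from by norm_cast,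
        show (algebraMap ℚ K) (g 1) = ((g 1 : ℚ) : K) from by norm_cast]
      exact hquad
    have hP0 : P = 0 := by
      by_contra hP
      have hdvd := minpoly.dvd ℚ e haev
      have hle : (minpoly ℚ e).natDegree ≤ 2 := by
        calc (minpoly ℚ e).natDegree ≤ P.natDegree := Polynomial.natDegree_le_of_dvd hdvd hP
        _ ≤ 2 := Polynomial.natDegree_quadratic_le
      have hint : IsIntegral ℚ e := IsIntegral.of_finite ℚ e
      have hdvd3 : (minpoly ℚ e).natDegree ∣ 3 := by
        refine ⟨Module.finrank ℚ⟮e⟯ K, ?_⟩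
        rw [← hdeg, ← IntermediateField.adjoin.finrank hint]
        exact (Module.finrank_mul_finrank ℚ ℚ⟮e⟯ K).symm
      rcases (Nat.dvd_prime Nat.prime_three).mp hdvd3 with h | h
      · exact heQ (minpoly.natDegree_eq_one_iff.mp h)
      · omega
    have hc2 : g 2 = 0 := by
      have := congrArg (fun p => Polynomial.coeff p 2) hP0
      simpa [hP_def] using this
    have hc0 : g 0 = 0 := by
      have := congrArg (fun p => Polynomial.coeff p 1) hP0
      simpa [hP_def] using this
    have hc1 : g 1 = 0 := by
      have := congrArg (fun p => Polynomial.coeff p 0) hP0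
      simpa [hP_def] using this
    intro i
    fin_cases i <;> assumption
  have hcard : Fintype.card (Fin 3) = Module.finrank ℚ K := by simp [hdeg]
  set b : Fin 3 → K := ![lam, e' * lam, e * lam] with hb_def
  set B : Module.Basis (Fin 3) ℚ K := basisOfLinearIndependentOfCardEqFinrank hb_li hcard with hB_def
  have hB : ⇑B = b := coe_basisOfLinearIndependentOfCardEqFinrank hb_li hcard
  set f : K →ₗ[ℚ] ℚ := B.coord 2 with hf_def
  have hfw : ∀ w : K, f w = B.repr w 2 := fun w => B.coord_apply 2 w
  have hfb : ∀ i : Fin 3, f (b i) = if i = (2 : Fin 3) then 1 else 0 := by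
    intro i
    rw [← congrFun hB i, hfw, B.repr_self, Finsupp.single_apply]
  have hf0 : f lam = 0 := by simpa [hb_def] using hfb 0
  have hf1 : f (e' * lam) = 0 := by simpa [hb_def] using hfb 1
  have hf2 : f (e * lam) = 1 := by simpa [hb_def] using hfb 2
  have hdecomp : ∀ w : K,
      w = B.repr w 0 • lam + B.repr w 1 • (e' * lam) + B.repr w 2 • (e * lam) := by
    intro w
    have h := (B.sum_repr w).symm
    rw [Fin.sum_univ_three] at h
    simpa only [hB, hb_def, Matrix.cons_val_zero, Matrix.cons_val_one, Matrix.head_cons,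
      Matrix.cons_val_two, Matrix.tail_cons, Matrix.head_fin_const] using h
  -- the nondegeneracy of det3 on the basis
  set d : ℝ := det3 K σR σC lam (e' * lam) (e * lam) with hd_def
  have hd : d ≠ 0 := by
    set τ1 : K →ₐ[ℚ] ℂ := (Complex.ofRealHom.comp σR).toRatAlgHom with hτ1
    set τ2 : K →ₐ[ℚ] ℂ := σC.toRatAlgHom with hτ2
    set τ3 : K →ₐ[ℚ] ℂ := ((starRingEnd ℂ).comp σC).toRatAlgHom with hτ3
    have hτ1x : ∀ x : K, τ1 x = ((σR x : ℝ) : ℂ) := fun x => rfl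
    have hτ2x : ∀ x : K, τ2 x = σC x := fun x => rfl
    have hτ3x : ∀ x : K, τ3 x = (starRingEnd ℂ) (σC x) := fun x => rfl
    obtain ⟨x0, hx0⟩ := hσC
    have h12 : τ1 ≠ τ2 := by
      intro h
      have h' := congrArg Complex.im (AlgHom.congr_fun h x0)
      rw [hτ1x, hτ2x] at h'
      simp at h'
      exact hx0 (by linarith)
    have h13 : τ1 ≠ τ3 := by
      intro h
      have h' := congrArg Complex.im (AlgHom.congr_fun h x0)
      rw [hτ1x, hτ3x] at h'
      simp at h'
      exact hx0 (by linarith)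
    have h23 : τ2 ≠ τ3 := by
      intro h
      have h' := congrArg Complex.im (AlgHom.congr_fun h x0)
      rw [hτ2x, hτ3x] at h'
      simp at h'
      exact hx0 (by linarith)
    have hginj : Function.Injective ![τ1, τ2, τ3] := by
      intro i j hij
      fin_cases i <;> fin_cases j <;>
        simp only [Matrix.cons_val_zero, Matrix.cons_val_one, Matrix.head_cons,
          Matrix.cons_val_two, Matrix.tail_cons, Matrix.head_fin_const] at hij <;>
        first
          | rfl
          | exact absurd hij h12
          | exact absurd hij h13
          | exact absurd hij h23
          | exact absurd hij.symm h12
          | exact absurd hij.symm h13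
          | exact absurd hij.symm h23
    have hcardA : Fintype.card (K →ₐ[ℚ] ℂ) = 3 := by
      rw [AlgHom.card ℚ K ℂ]; exact hdeg
    have hbij : Function.Bijective ![τ1, τ2, τ3] :=
      (Fintype.bijective_iff_injective_and_card _).mpr ⟨hginj, by simp [hcardA]⟩
    set eqv : Fin 3 ≃ (K →ₐ[ℚ] ℂ) := Equiv.ofBijective _ hbij with heqv
    have hdisc : Algebra.discr ℚ b ≠ 0 := by
      rw [← hB]; exact Algebra.discr_not_zero_of_basis ℚ B
    have hmat : Algebra.embeddingsMatrixReindex ℚ ℂ b eqv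
        = Matrix.of (fun i j => (![τ1, τ2, τ3] j) (b i)) := by
      ext i j
      simp [Algebra.embeddingsMatrixReindex, Matrix.reindex_apply, Matrix.submatrix_apply,
        Equiv.symm_symm, Algebra.embeddingsMatrix_apply, heqv, Equiv.ofBijective_apply,
        Matrix.of_apply]
    have hdet2 := Algebra.discr_eq_det_embeddingsMatrixReindex_pow_two ℚ ℂ b eqv
    have hb0 : b 0 = lam := rfl
    have hb1 : b 1 = e' * lam := rfl
    have hb2 : b 2 = e * lam := rfl
    have hh1 : ∀ x : K, (![τ1, τ2, τ3] (0 : Fin 3)) x = ((σR x : ℝ) : ℂ) := by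
      rw [show (![τ1, τ2, τ3] (0 : Fin 3)) = τ1 from rfl]; exact hτ1x
    have hh2 : ∀ x : K, (![τ1, τ2, τ3] (1 : Fin 3)) x = σC x := by
      rw [show (![τ1, τ2, τ3] (1 : Fin 3)) = τ2 from rfl]; exact hτ2x
    have hh3 : ∀ x : K, (![τ1, τ2, τ3] (2 : Fin 3)) x = (starRingEnd ℂ) (σC x) := by
      rw [show (![τ1, τ2, τ3] (2 : Fin 3)) = τ3 from rfl]; exact hτ3x
    have hdetval : (Algebra.embeddingsMatrixReindex ℚ ℂ b eqv).det
        = ((d : ℝ) : ℂ) * (-2 * Complex.I) := by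
      rw [hmat, det_embed σR σC b ![τ1, τ2, τ3] hh1 hh2 hh3, hb0, hb1, hb2, ← hd_def]
    intro h0
    rw [h0] at hdetval
    simp only [Complex.ofReal_zero, zero_mul] at hdetval
    rw [hdetval] at hdet2
    apply hdisc
    have : (algebraMap ℚ ℂ) (Algebra.discr ℚ b) = 0 := by rw [hdet2]; ring
    exact (map_eq_zero_iff (algebraMap ℚ ℂ) (algebraMap ℚ ℂ).injective).mp this
  have hImE' : (σC e').im ≠ 0 :=
    fun h => hd (det3_degenerate σR σC lam e e' hee' h)
  set m : ℝ := (σC lam * (starRingEnd ℂ) (σC (e' * lam))).im with hm_def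
  have hmval : m = -(((σC lam).re^2 + (σC lam).im^2) * (σC e').im) := by
    rw [hm_def, map_mul]
    exact im_uwu (σC lam) (σC e')
  have hnsq : (σC lam).re^2 + (σC lam).im^2 ≠ 0 := by
    have hu : σC lam ≠ 0 := fun h => hlam0 ((map_eq_zero_iff σC σC.injective).mp h)
    have := Complex.normSq_pos.mpr hu
    rw [Complex.normSq_apply] at this
    nlinarith
  have hm : m ≠ 0 := by
    rw [hmval]
    exact neg_ne_zero.mpr (mul_ne_zero hnsq hImE')
  -- integrality scaling
  have helam : e * lam ∈ Lfrac K 𝔣 𝔟 := by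
    have h0 := FractionalIdeal.mem_coe.mpr hlam.1
    have h1 := Submodule.smul_mem _ (ε : 𝓞 K) h0
    rw [Algebra.smul_def] at h1
    exact FractionalIdeal.mem_coe.mp h1
  obtain ⟨c, hc0, hcint, hcone⟩ :
      ∃ c : ℚ, 0 < c ∧ (∀ v : K, v ∈ Lfrac K 𝔣 𝔟 → ∃ n : ℤ, c * f v = n) ∧
        (∃ v : K, v ∈ Lfrac K 𝔣 𝔟 ∧ c * f v = 1) := by
    obtain ⟨dK, hdKmem, hdKint⟩ := (Lfrac K 𝔣 𝔟).isFractional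
    have hdK0 : dK ≠ 0 := mem_nonZeroDivisors_iff_ne_zero.mp hdKmem
    have hadK0 : algebraMap (𝓞 K) K dK ≠ 0 :=
      (map_ne_zero_iff _ (IsFractionRing.injective (𝓞 K) K)).mpr hdK0
    set F : 𝓞 K →+ ℚ := f.toAddMonoidHom.comp
      ((AddMonoidHom.mulLeft ((algebraMap (𝓞 K) K dK)⁻¹)).comp
        (algebraMap (𝓞 K) K).toAddMonoidHom) with hF
    have hFx : ∀ w : 𝓞 K, F w = f ((algebraMap (𝓞 K) K dK)⁻¹ * algebraMap (𝓞 K) K w) :=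
      fun w => rfl
    set BI := NumberField.RingOfIntegers.basis K with hBI
    set Nd : ℕ := ∏ i, (F (BI i)).den with hNdd
    have hNdnat : Nd ≠ 0 := by
      rw [hNdd]
      exact Finset.prod_ne_zero_iff.mpr (fun i _ => (F (BI i)).den_ne_zero)
    have hNd0 : (Nd:ℚ) ≠ 0 := by exact_mod_cast hNdnat
    have hNdi : ∀ i, ∃ z : ℤ, (Nd:ℚ) * F (BI i) = z := fun i =>
      rat_mul_den _ _ (Finset.dvd_prod_of_mem _ (Finset.mem_univ i))
    choose zf hzf using hNdi
    have hNL : ∀ v : K, v ∈ Lfrac K 𝔣 𝔟 → ∃ z : ℤ, (Nd:ℚ) * f v = z := by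
      intro v hv
      obtain ⟨w, hw⟩ := hdKint v (FractionalIdeal.mem_coe.mpr hv)
      have hfv : f v = F w := by
        rw [hFx, hw, Algebra.smul_def, ← mul_assoc, inv_mul_cancel₀ hadK0, one_mul]
      have hFsum : F w = ∑ i, (BI.repr w i : ℚ) * F (BI i) := by
        conv_lhs => rw [← BI.sum_repr w]
        rw [map_sum]
        refine Finset.sum_congr rfl (fun i _ => ?_)
        rw [AddMonoidHom.map_zsmul, zsmul_eq_mul]
      refine ⟨∑ i, BI.repr w i * zf i, ?_⟩
      rw [hfv, hFsum, Finset.mul_sum]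
      push_cast
      refine Finset.sum_congr rfl (fun i _ => ?_)
      rw [← hzf i]
      ring
    set S : AddSubgroup ℤ :=
      { carrier := {n : ℤ | ∃ v : K, v ∈ Lfrac K 𝔣 𝔟 ∧ (Nd:ℚ) * f v = n}
        add_mem' := by
          rintro x y ⟨v, hv, hx⟩ ⟨u, hu, hy⟩
          refine ⟨v + u, ?_, ?_⟩
          · exact FractionalIdeal.mem_coe.mp (Submodule.add_mem _
              (FractionalIdeal.mem_coe.mpr hv) (FractionalIdeal.mem_coe.mpr hu))
          · rw [map_add, mul_add, hx, hy]; push_cast; ring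
        zero_mem' := ⟨0, by simpa using (Lfrac K 𝔣 𝔟).zero_mem, by simp⟩
        neg_mem' := by
          rintro x ⟨v, hv, hx⟩
          refine ⟨-v, ?_, ?_⟩
          · exact FractionalIdeal.mem_coe.mp (Submodule.neg_mem _
              (FractionalIdeal.mem_coe.mpr hv))
          · rw [map_neg, mul_neg, hx]; push_cast; ring } with hS
    obtain ⟨g0, hg0⟩ := Int.subgroup_cyclic S
    have hNdS : (Nd:ℤ) ∈ S := ⟨e * lam, helam, by rw [hf2, mul_one]; push_cast; ring⟩
    have hg00 : g0 ≠ 0 := by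
      rintro rfl
      rw [hg0] at hNdS
      obtain ⟨n, hn⟩ := AddSubgroup.mem_closure_singleton.mp hNdS
      rw [smul_zero] at hn
      exact hNdnat (by exact_mod_cast hn.symm)
    set gg : ℤ := if 0 ≤ g0 then g0 else -g0 with hgg
    have hSgg : S = AddSubgroup.closure {gg} := by
      rw [hgg]
      split_ifs
      · exact hg0
      · rw [← Set.neg_singleton, AddSubgroup.closure_neg]; exact hg0
    have hggpos : 0 < gg := by rw [hgg]; split_ifs <;> omega
    have hggQ : (gg:ℚ) ≠ 0 := by
      have : (0:ℚ) < (gg:ℚ) := by exact_mod_cast hggpos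
      linarith
    have hggS : gg ∈ S := by
      rw [hSgg]; exact AddSubgroup.subset_closure (Set.mem_singleton _)
    have hdvd : ∀ n : ℤ, n ∈ S → gg ∣ n := by
      intro n hn
      rw [hSgg] at hn
      obtain ⟨k, hk⟩ := AddSubgroup.mem_closure_singleton.mp hn
      exact ⟨k, by rw [← hk, zsmul_eq_mul]; push_cast; ring⟩
    refine ⟨(Nd:ℚ)/(gg:ℚ), ?_, ?_, ?_⟩
    · apply div_pos
      · have : 0 < Nd := Nat.pos_of_ne_zero hNdnat
        exact_mod_cast this
      · exact_mod_cast hggpos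
    · intro v hv
      obtain ⟨z, hz⟩ := hNL v hv
      obtain ⟨k, hk⟩ := hdvd z ⟨v, hv, hz⟩
      refine ⟨k, ?_⟩
      rw [div_mul_eq_mul_div, hz, hk]
      push_cast
      rw [mul_comm (gg:ℚ) (k:ℚ), mul_div_assoc, div_self hggQ, mul_one]
    · obtain ⟨v, hv, hveq⟩ := hggS
      refine ⟨v, hv, ?_⟩
      rw [div_mul_eq_mul_div, hveq, div_self hggQ]
  -- sign choice
  set t : ℚ := if 0 < d * m then 1 else -1 with ht_def
  have ht : t = 1 ∨ t = -1 := by rw [ht_def]; split_ifs <;> simp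
  have ht0 : t ≠ 0 := by rcases ht with h | h <;> rw [h] <;> norm_num
  have htsq : t * t = 1 := by rcases ht with h | h <;> rw [h] <;> norm_num
  have htsqR : (t:ℝ) * (t:ℝ) = 1 := by exact_mod_cast htsq
  have htc0 : t * c ≠ 0 := mul_ne_zero ht0 (ne_of_gt hc0)
  have hinv : 0 < (t:ℝ) * (d * m) := by
    rw [ht_def]
    split_ifs with h
    · push_cast; linarith
    · have hdm : d * m ≠ 0 := mul_ne_zero hd hm
      have hlt : d * m < 0 := lt_of_le_of_ne (not_lt.mp h) hdm
      push_cast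
      nlinarith
  set a : K →ₗ[ℚ] ℚ := (t * c) • f with ha_def
  have ha : ∀ v : K, a v = t * c * f v := by
    intro v; rw [ha_def]; simp [LinearMap.smul_apply, smul_eq_mul]
  have hdet3_eq : ∀ δ : K, det3 K σR σC lam (e' * lam) δ = (B.repr δ 2 : ℝ) * d := by
    intro δ
    conv_lhs => rw [hdecomp δ]
    rw [det3_comb3 σR σC lam (e' * lam) _ _ _ lam (e' * lam) (e * lam),
      det3_self1, det3_self2, ← hd_def]
    push_cast
    ring
  have hprim : IsPrimitiveOn K (Lfrac K 𝔣 𝔟) a := by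
    constructor
    · intro v hv
      obtain ⟨n, hn⟩ := hcint v hv
      rcases ht with h | h
      · exact ⟨n, by rw [ha, h, one_mul, hn]⟩
      · refine ⟨-n, ?_⟩
        rw [ha, h]
        push_cast
        linarith [hn]
    · obtain ⟨v, hv, hveq⟩ := hcone
      rcases ht with h | h
      · exact ⟨v, hv, by rw [ha, h, one_mul, hveq]⟩
      · refine ⟨-v, ?_, ?_⟩
        · exact FractionalIdeal.mem_coe.mp (Submodule.neg_mem _
            (FractionalIdeal.mem_coe.mpr hv))
        · rw [ha, map_neg, h]
          linear_combination hveq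
  have halam : a lam = 0 := by rw [ha, hf0, mul_zero]
  have hae' : a (e' * lam) = 0 := by rw [ha, hf1, mul_zero]
  have hae : a (e * lam) = t * c := by rw [ha, hf2, mul_one]
  have hepsa : ∀ (a' : K →ₗ[ℚ] ℚ) (v : K), epsDual K ε a' v = a' (e' * v) := by
    intro a' v
    rw [he'_def]
    rfl
  have hepsalam : epsDual K ε a lam = 0 := by rw [hepsa, hae']
  have hli2 : LinearIndependent ℚ ![a, epsDual K ε a] := by
    rw [linearIndependent_fin2]
    simp only [Matrix.cons_val_one, Matrix.head_cons, Matrix.cons_val_zero]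
    constructor
    · intro h0
      have h1 : epsDual K ε a (e * (e * lam)) = t * c := by
        rw [hepsa, show e' * (e * (e * lam)) = (e' * e) * (e * lam) by ring, he'e, one_mul, hae]
      rw [h0] at h1
      simp only [LinearMap.zero_apply] at h1
      exact htc0 h1.symm
    · intro r hr
      have h1 := congrArg (fun φ : K →ₗ[ℚ] ℚ => φ (e * lam)) hr
      simp only [LinearMap.smul_apply, smul_eq_mul] at h1
      rw [hepsa, show e' * (e * lam) = (e' * e) * lam by ring, he'e, one_mul, halam,
        mul_zero, hae] at h1
      exact htc0 h1.symm
  have hmemU : memU K σR σC a (xlin K σC) := by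
    rcases lt_or_gt_of_ne hm with hmneg | hmpos
    · -- m < 0, oriented basis (e'λ, λ)
      have htd : (t:ℝ) * d < 0 := by nlinarith [hinv]
      refine ⟨e' * lam, lam, hae', halam, ?_, ?_, ?_⟩
      · have hcomp := hb_li.comp ![1, 0] (by decide)
        have heq : (b ∘ ![1, 0] : Fin 2 → K) = ![e' * lam, lam] := by
          funext i; fin_cases i <;> rfl
        rwa [heq] at hcomp
      · intro δ hδ
        rw [det3_swap12, hdet3_eq δ]
        rw [ha, hfw] at hδ
        have hfδ : 0 < (t:ℝ) * (B.repr δ 2 : ℝ) := by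
          have h2 : 0 < t * B.repr δ 2 := by nlinarith [hc0, hδ]
          exact_mod_cast h2
        nlinarith [mul_pos hfδ (neg_pos.mpr htd), htsqR]
      · show 0 < (σC (e' * lam) * (starRingEnd ℂ) (σC lam)).im
        rw [im_swap, ← hm_def]
        linarith
    · -- m > 0, oriented basis (λ, e'λ)
      have htd : 0 < (t:ℝ) * d := by nlinarith [hinv]
      refine ⟨lam, e' * lam, halam, hae', ?_, ?_, ?_⟩
      · have hcomp := hb_li.comp ![0, 1] (by decide)
        have heq : (b ∘ ![0, 1] : Fin 2 → K) = ![lam, e' * lam] := by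
          funext i; fin_cases i <;> rfl
        rwa [heq] at hcomp
      · intro δ hδ
        rw [hdet3_eq δ]
        rw [ha, hfw] at hδ
        have hfδ : 0 < (t:ℝ) * (B.repr δ 2 : ℝ) := by
          have h2 : 0 < t * B.repr δ 2 := by nlinarith [hc0, hδ]
          exact_mod_cast h2
        nlinarith [mul_pos hfδ htd, htsqR]
      · show 0 < (σC lam * (starRingEnd ℂ) (σC (e' * lam))).im
        rw [← hm_def]
        exact hmpos
  refine ⟨a, ⟨⟨hprim, ⟨halam, hepsalam, hli2⟩, hmemU⟩, ?_⟩⟩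
  rintro a' ⟨⟨hint', hone'⟩, ⟨h1', h2', -⟩, hmem'⟩
  have ha'e' : a' (e' * lam) = 0 := by rw [← hepsa]; exact h2'
  have hBi : ∀ i : Fin 3, B i = b i := fun i => congrFun hB i
  have hkey : a' = (a' (e * lam) / (t * c)) • a := by
    apply B.ext
    intro i
    rw [hBi i]
    fin_cases i
    · show a' lam = ((a' (e * lam) / (t * c)) • a) lam
      rw [LinearMap.smul_apply, smul_eq_mul, halam, h1', mul_zero]
    · show a' (e' * lam) = ((a' (e * lam) / (t * c)) • a) (e' * lam)
      rw [LinearMap.smul_apply, smul_eq_mul, hae', ha'e', mul_zero]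
    · show a' (e * lam) = ((a' (e * lam) / (t * c)) • a) (e * lam)
      rw [LinearMap.smul_apply, smul_eq_mul, hae]
      field_simp
  set κ : ℚ := a' (e * lam) / (t * c) with hκdef
  have hκ0 : κ ≠ 0 := by
    intro h
    rw [h, zero_smul] at hkey
    obtain ⟨v, hv, h1v⟩ := hone'
    rw [hkey] at h1v
    simp at h1v
  obtain ⟨v₀, hv₀, hav₀⟩ := hprim.2
  obtain ⟨n, hn⟩ : ∃ n : ℤ, κ = (n : ℚ) := by
    obtain ⟨n, hn⟩ := hint' v₀ hv₀
    refine ⟨n, ?_⟩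
    rw [← hn, hkey]
    simp [LinearMap.smul_apply, smul_eq_mul, hav₀]
  obtain ⟨v₁, hv₁, h1v₁⟩ := hone'
  obtain ⟨nm, hnm⟩ := hprim.1 v₁ hv₁
  have hκnm : κ * (nm : ℚ) = 1 := by
    rw [← hnm]
    rw [hkey] at h1v₁
    simpa [LinearMap.smul_apply, smul_eq_mul] using h1v₁
  have hint1 : n * nm = 1 := by
    have hq1 : ((n * nm : ℤ) : ℚ) = 1 := by push_cast; rw [← hn]; exact hκnm
    exact_mod_cast hq1
  rcases Int.eq_one_or_neg_one_of_mul_eq_one hint1 with hcase | hcase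
  · rw [hkey, hn, hcase]
    rw [Int.cast_one, one_smul]
  · exfalso
    have hκ1 : κ = -1 := by rw [hn, hcase]; norm_num
    rw [hκ1] at hkey
    obtain ⟨p, qq, hp, hq, hpqli, hor, him⟩ := hmem'
    have hap : a p = 0 := by
      rw [hkey] at hp
      simpa using hp
    have haq : a qq = 0 := by
      rw [hkey] at hq
      simpa using hq
    have hfp : B.repr p 2 = 0 := by
      have h2 := hap
      rw [ha] at h2
      have hfp0 : f p = 0 := (mul_eq_zero.mp h2).resolve_left htc0
      rw [← hfw]; exact hfp0
    have hfq : B.repr qq 2 = 0 := by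
      have h2 := haq
      rw [ha] at h2
      have hfq0 : f qq = 0 := (mul_eq_zero.mp h2).resolve_left htc0
      rw [← hfw]; exact hfq0
    have hpdec : p = B.repr p 0 • lam + B.repr p 1 • (e' * lam) := by
      have h2 := hdecomp p
      rw [hfp, zero_smul, add_zero] at h2
      exact h2
    have hqdec : qq = B.repr qq 0 • lam + B.repr qq 1 • (e' * lam) := by
      have h2 := hdecomp qq
      rw [hfq, zero_smul, add_zero] at h2
      exact h2
    set α : ℚ := B.repr p 0 with hα
    set β : ℚ := B.repr p 1 with hβ
    set γ : ℚ := B.repr qq 0 with hγ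
    set δq : ℚ := B.repr qq 1 with hδq
    set D : ℚ := α * δq - β * γ with hD
    have hσp : σC p = (α:ℂ) * σC lam + (β:ℂ) * σC (e' * lam) := by
      conv_lhs => rw [hpdec]
      simp [Rat.smul_def, map_add, map_mul, map_ratCast]
    have hσq : σC qq = (γ:ℂ) * σC lam + (δq:ℂ) * σC (e' * lam) := by
      conv_lhs => rw [hqdec]
      simp [Rat.smul_def, map_add, map_mul, map_ratCast]
    have himval : ((xlin K σC) p * (starRingEnd ℂ) ((xlin K σC) qq)).im = (D:ℝ) * m := by
      rw [show (xlin K σC) p = σC p from rfl, show (xlin K σC) qq = σC qq from rfl,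
        hσp, hσq, im_comb, ← hm_def, hD]
      push_cast
      ring
    have hDm : 0 < (D:ℝ) * m := by rw [← himval]; exact him
    set δ0 : K := (-t) • (e * lam) with hδ0
    have ha'δ0 : 0 < a' δ0 := by
      have haδ0 : a δ0 = -t * (t * c) := by
        rw [hδ0, LinearMap.map_smul, hae, smul_eq_mul]
      rw [hkey, LinearMap.smul_apply, haδ0, smul_eq_mul]
      nlinarith [htsq, hc0]
    have h3 := hor δ0 ha'δ0
    have hdet3p : det3 K σR σC p qq δ0 = ((-t : ℚ):ℝ) * ((D:ℝ) * d) := by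
      rw [hδ0, det3_smul3]
      conv_lhs => rw [hpdec, hqdec]
      rw [det3_comb12, ← hd_def, hD]
      push_cast
      ring
    rw [hdet3p] at h3
    push_cast at h3
    have h4 := mul_pos h3 hDm
    nlinarith [mul_nonneg hinv.le (sq_nonneg ((D:ℝ))), h4]
end
end

section
/- Assume in addition that 𝔞 is coprime to 𝔟. Then there exists an admissible element λ ∈ L; that is, there exists λ ∈ N(𝔞)𝔞⁻¹L with λ ≡ q mod qL and λ ∉ N(𝔞)L. -/
noncomputable section

open scoped NumberField nonZeroDivisors

variable (K : Type) [Field K] [NumberField K]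

namespace AdmissibleAux

variable {K}

lemma intK_mul_mem {I : FractionalIdeal (𝓞 K)⁰ K} {z : K} (hz : z ∈ I) (n : ℤ) :
    (n : K) * z ∈ I := by
  rw [← FractionalIdeal.mem_coe] at hz ⊢
  have h := Submodule.smul_mem (I : Submodule (𝓞 K) K) ((n : ℤ) : 𝓞 K) hz
  rwa [Algebra.smul_def, map_intCast] at h

lemma add_mem' {I : FractionalIdeal (𝓞 K)⁰ K} {x y : K} (hx : x ∈ I) (hy : y ∈ I) :
    x + y ∈ I := by
  rw [← FractionalIdeal.mem_coe] at hx hy ⊢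
  exact add_mem hx hy

lemma sub_mem' {I : FractionalIdeal (𝓞 K)⁰ K} {x y : K} (hx : x ∈ I) (hy : y ∈ I) :
    x - y ∈ I := by
  rw [← FractionalIdeal.mem_coe] at hx hy ⊢
  exact sub_mem hx hy

variable (K)

/-- Auxiliary version of the main theorem, with all the arithmetic preprocessing done. -/
lemma aux (𝔣 𝔟 𝔞 : Ideal (𝓞 K)) (p q : ℕ) (hpnorm : Ideal.absNorm 𝔞 = p)
    (h𝔣bot : 𝔣 ≠ ⊥) (h𝔟bot : 𝔟 ≠ ⊥) (h𝔞bot : 𝔞 ≠ ⊥) (h𝔞top : 𝔞 ≠ ⊤)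
    (hp0 : 0 < p) (hq0 : 0 < q) (hq𝔣 : (q : 𝓞 K) ∈ 𝔣)
    (hpq : IsCoprime (p : ℤ) (q : ℤ)) :
    ∃ lam : K, Admissible K 𝔣 𝔟 𝔞 q lam := by
  classical
  have hpK0 : (p : K) ≠ 0 := Nat.cast_ne_zero.mpr hp0.ne'
  have hqK0 : (q : K) ≠ 0 := Nat.cast_ne_zero.mpr hq0.ne'
  obtain ⟨u, v, huv⟩ := hpq
  -- the ideal 𝔠 with 𝔞 * 𝔠 = (p)
  have hpmem : (p : 𝓞 K) ∈ 𝔞 := hpnorm ▸ Ideal.absNorm_mem 𝔞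
  obtain ⟨𝔠, h𝔠⟩ : 𝔞 ∣ Ideal.span {(p : 𝓞 K)} :=
    Ideal.dvd_iff_le.mpr ((Ideal.span_singleton_le_iff_mem _).mpr hpmem)
  -- fractional ideal versions
  have hacF : (𝔞 : FractionalIdeal (𝓞 K)⁰ K) * (𝔠 : FractionalIdeal (𝓞 K)⁰ K)
      = FractionalIdeal.spanSingleton (𝓞 K)⁰ (p : K) := by
    rw [← FractionalIdeal.coeIdeal_mul, ← h𝔠, FractionalIdeal.coeIdeal_span_singleton,
      map_natCast]
  have h𝔞F0 : (𝔞 : FractionalIdeal (𝓞 K)⁰ K) ≠ 0 := FractionalIdeal.coeIdeal_ne_zero.mpr h𝔞bot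
  have hsF0 : FractionalIdeal.spanSingleton (𝓞 K)⁰ (p : K) ≠ 0 :=
    FractionalIdeal.spanSingleton_ne_zero_iff.mpr hpK0
  have h𝔠F0 : (𝔠 : FractionalIdeal (𝓞 K)⁰ K) ≠ 0 := by
    intro h
    exact hsF0 (by rw [← hacF, h, mul_zero])
  have hL0 : Lfrac K 𝔣 𝔟 ≠ 0 := by
    simp only [Lfrac]
    exact mul_ne_zero (FractionalIdeal.coeIdeal_ne_zero.mpr h𝔣bot)
      (inv_ne_zero (FractionalIdeal.coeIdeal_ne_zero.mpr h𝔟bot))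
  -- q ∈ L
  have hq𝔣F : (q : K) ∈ (𝔣 : FractionalIdeal (𝓞 K)⁰ K) := by
    rw [FractionalIdeal.mem_coeIdeal]
    exact ⟨(q : 𝓞 K), hq𝔣, map_natCast _ q⟩
  have h𝔟F0 : (𝔟 : FractionalIdeal (𝓞 K)⁰ K) ≠ 0 := FractionalIdeal.coeIdeal_ne_zero.mpr h𝔟bot
  have hone_le : (1 : FractionalIdeal (𝓞 K)⁰ K) ≤ (𝔟 : FractionalIdeal (𝓞 K)⁰ K)⁻¹ := by
    have h1 : (𝔟 : FractionalIdeal (𝓞 K)⁰ K) * (𝔟 : FractionalIdeal (𝓞 K)⁰ K)⁻¹ = 1 :=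
      mul_inv_cancel₀ h𝔟F0
    calc (1 : FractionalIdeal (𝓞 K)⁰ K)
        = (𝔟 : FractionalIdeal (𝓞 K)⁰ K) * (𝔟 : FractionalIdeal (𝓞 K)⁰ K)⁻¹ := h1.symm
      _ ≤ 1 * (𝔟 : FractionalIdeal (𝓞 K)⁰ K)⁻¹ :=
          mul_left_mono FractionalIdeal.coeIdeal_le_one
      _ = (𝔟 : FractionalIdeal (𝓞 K)⁰ K)⁻¹ := one_mul _
  have h𝔣leL : (𝔣 : FractionalIdeal (𝓞 K)⁰ K) ≤ Lfrac K 𝔣 𝔟 := by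
    simp only [Lfrac]
    calc (𝔣 : FractionalIdeal (𝓞 K)⁰ K) = (𝔣 : FractionalIdeal (𝓞 K)⁰ K) * 1 := (mul_one _).symm
      _ ≤ (𝔣 : FractionalIdeal (𝓞 K)⁰ K) * (𝔟 : FractionalIdeal (𝓞 K)⁰ K)⁻¹ :=
          mul_right_mono hone_le
  have hqL : (q : K) ∈ Lfrac K 𝔣 𝔟 := h𝔣leL hq𝔣F
  -- 𝔞 * (𝔠 * L) ≤ 𝔠 * L and 𝔠 * L ≤ L
  have hsub : (𝔞 : FractionalIdeal (𝓞 K)⁰ K) * ((𝔠 : FractionalIdeal (𝓞 K)⁰ K) * Lfrac K 𝔣 𝔟)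
      ≤ (𝔠 : FractionalIdeal (𝓞 K)⁰ K) * Lfrac K 𝔣 𝔟 := by
    have h := mul_left_mono
      (a := (𝔠 : FractionalIdeal (𝓞 K)⁰ K) * Lfrac K 𝔣 𝔟)
      (FractionalIdeal.coeIdeal_le_one (I := 𝔞))
    simpa using h
  have h𝔠L_le : (𝔠 : FractionalIdeal (𝓞 K)⁰ K) * Lfrac K 𝔣 𝔟 ≤ Lfrac K 𝔣 𝔟 := by
    have h := mul_left_mono (a := Lfrac K 𝔣 𝔟)
      (FractionalIdeal.coeIdeal_le_one (I := 𝔠))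
    simpa using h
  -- choose y ∈ 𝔠L \ 𝔞𝔠L
  have hkey : ¬ ((𝔠 : FractionalIdeal (𝓞 K)⁰ K) * Lfrac K 𝔣 𝔟
      ≤ (𝔞 : FractionalIdeal (𝓞 K)⁰ K) * ((𝔠 : FractionalIdeal (𝓞 K)⁰ K) * Lfrac K 𝔣 𝔟)) := by
    intro hle
    have hCL0 : (𝔠 : FractionalIdeal (𝓞 K)⁰ K) * Lfrac K 𝔣 𝔟 ≠ 0 := mul_ne_zero h𝔠F0 hL0
    have heq : (𝔞 : FractionalIdeal (𝓞 K)⁰ K)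
          * ((𝔠 : FractionalIdeal (𝓞 K)⁰ K) * Lfrac K 𝔣 𝔟)
        = 1 * ((𝔠 : FractionalIdeal (𝓞 K)⁰ K) * Lfrac K 𝔣 𝔟) := by
      rw [one_mul]
      exact le_antisymm hsub hle
    have h𝔞1 : (𝔞 : FractionalIdeal (𝓞 K)⁰ K) = 1 := mul_right_cancel₀ hCL0 heq
    rw [FractionalIdeal.coeIdeal_eq_one, Ideal.one_eq_top] at h𝔞1
    exact h𝔞top h𝔞1
  obtain ⟨y, hyC, hyp⟩ := SetLike.not_le_iff_exists.mp hkey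
  have hyL : y ∈ Lfrac K 𝔣 𝔟 := h𝔠L_le hyC
  rw [← mul_assoc, hacF] at hyp
  -- y / p ∉ L
  have hy' : (p : K)⁻¹ * y ∉ Lfrac K 𝔣 𝔟 := by
    intro h
    apply hyp
    rw [FractionalIdeal.mem_singleton_mul]
    exact ⟨(p : K)⁻¹ * y, h, (mul_inv_cancel_left₀ hpK0 y).symm⟩
  -- p * q ∈ 𝔠 * L
  have hpq_mem : (p : K) * (q : K) ∈ (𝔠 : FractionalIdeal (𝓞 K)⁰ K) * Lfrac K 𝔣 𝔟 := by
    have h1 : (p : K) * (q : K)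
        ∈ (𝔞 : FractionalIdeal (𝓞 K)⁰ K) * ((𝔠 : FractionalIdeal (𝓞 K)⁰ K) * Lfrac K 𝔣 𝔟) := by
      rw [← mul_assoc, hacF, FractionalIdeal.mem_singleton_mul]
      exact ⟨(q : K), hqL, rfl⟩
    exact hsub h1
  -- the admissible element
  set lam : K := ((u * (p : ℤ) * (q : ℤ) : ℤ) : K) + ((v * (q : ℤ) : ℤ) : K) * y with hlam
  have hcast : (u : K) * (p : K) + (v : K) * (q : K) = 1 := by exact_mod_cast huv
  have hlamC : lam ∈ (𝔠 : FractionalIdeal (𝓞 K)⁰ K) * Lfrac K 𝔣 𝔟 := by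
    have h1 : ((u * (p : ℤ) * (q : ℤ) : ℤ) : K) = (u : K) * ((p : K) * (q : K)) := by
      push_cast; ring
    rw [hlam, h1]
    exact add_mem' (intK_mul_mem hpq_mem u) (intK_mul_mem hyC (v * (q : ℤ)))
  have hlamL : lam ∈ Lfrac K 𝔣 𝔟 := h𝔠L_le hlamC
  refine ⟨lam, hlamL, ?_, ?_, ?_⟩
  · -- lam / p ∈ 𝔞⁻¹ L
    rw [hpnorm]
    have h𝔞inv : (𝔞 : FractionalIdeal (𝓞 K)⁰ K)⁻¹
        = (𝔠 : FractionalIdeal (𝓞 K)⁰ K)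
          * (FractionalIdeal.spanSingleton (𝓞 K)⁰ (p : K))⁻¹ := by
      refine inv_eq_of_mul_eq_one_right ?_
      rw [← mul_assoc, hacF, mul_inv_cancel₀ hsF0]
    simp only [aInvL]
    rw [h𝔞inv, FractionalIdeal.spanSingleton_inv, mul_comm (𝔠 : FractionalIdeal (𝓞 K)⁰ K),
      mul_assoc, FractionalIdeal.mem_singleton_mul]
    exact ⟨lam, hlamC, rfl⟩
  · -- (lam - q)/q ∈ L
    have h2 : lam - (q : K) = (q : K) * ((v : K) * (y - (q : K))) := by
      rw [hlam]
      push_cast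
      linear_combination (q : K) * hcast
    rw [h2, inv_mul_cancel_left₀ hqK0]
    exact intK_mul_mem (sub_mem' hyL hqL) v
  · -- lam / p ∉ L
    rw [hpnorm]
    intro h
    have ht : ((v * (q : ℤ) : ℤ) : K) * ((p : K)⁻¹ * y) ∈ Lfrac K 𝔣 𝔟 := by
      have heq : ((v * (q : ℤ) : ℤ) : K) * ((p : K)⁻¹ * y)
          = (p : K)⁻¹ * lam - (u : K) * (q : K) := by
        rw [hlam]
        field_simp
        push_cast
        ring
      rw [heq]
      exact sub_mem' h (intK_mul_mem hqL u)
    apply hy'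
    have h1K : ((v * (q : ℤ) : ℤ) : K) + (u : K) * (p : K) = 1 := by
      push_cast
      linear_combination hcast
    have hId : (p : K)⁻¹ * y
        = ((v * (q : ℤ) : ℤ) : K) * ((p : K)⁻¹ * y) + (u : K) * y := by
      calc (p : K)⁻¹ * y
          = (((v * (q : ℤ) : ℤ) : K) + (u : K) * (p : K)) * ((p : K)⁻¹ * y) := by
            rw [h1K, one_mul]
        _ = ((v * (q : ℤ) : ℤ) : K) * ((p : K)⁻¹ * y)
            + (u : K) * ((p : K) * ((p : K)⁻¹ * y)) := by ring
        _ = ((v * (q : ℤ) : ℤ) : K) * ((p : K)⁻¹ * y) + (u : K) * y := by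
            rw [mul_inv_cancel_left₀ hpK0]
    rw [hId]
    exact add_mem' ht (intK_mul_mem hyL u)

end AdmissibleAux

/-- Existence of admissible elements: if moreover `𝔞` is coprime to `𝔟`, then there exists
an admissible element `λ ∈ L = 𝔣𝔟⁻¹`. -/
theorem exists_admissible
    (hdeg : Module.finrank ℚ K = 3)
    (σR : K →+* ℝ) (σC : K →+* ℂ) (hσC : ∃ x : K, (σC x).im ≠ 0)
    (𝔣 𝔟 𝔞 : Ideal (𝓞 K))
    (h𝔣bot : 𝔣 ≠ ⊥) (h𝔣top : 𝔣 ≠ ⊤) (h𝔟bot : 𝔟 ≠ ⊥)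
    (h𝔣𝔟 : IsCoprime 𝔣 𝔟)
    (h𝔞N𝔣 : IsCoprime 𝔞 (Ideal.span {(Ideal.absNorm 𝔣 : 𝓞 K)}))
    (h𝔞prime : (Ideal.absNorm 𝔞).Prime) (h𝔞odd : Odd (Ideal.absNorm 𝔞))
    (h𝔞𝔟 : IsCoprime 𝔞 𝔟)
    (q : ℕ) (hq0 : 0 < q) (hq𝔣 : (q : 𝓞 K) ∈ 𝔣)
    (hqmin : ∀ m : ℕ, 0 < m → (m : 𝓞 K) ∈ 𝔣 → q ≤ m) :
    ∃ lam : K, Admissible K 𝔣 𝔟 𝔞 q lam := by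
  have h𝔞top : 𝔞 ≠ ⊤ := by
    intro h
    rw [h, Ideal.absNorm_top] at h𝔞prime
    exact h𝔞prime.ne_one rfl
  have h𝔞bot : 𝔞 ≠ ⊥ := by
    intro h
    rw [h, Ideal.absNorm_bot] at h𝔞prime
    exact h𝔞prime.ne_zero rfl
  -- q divides the norm of 𝔣
  have hN𝔣 : (Ideal.absNorm 𝔣 : 𝓞 K) ∈ 𝔣 := Ideal.absNorm_mem 𝔣
  have hqdvd : q ∣ Ideal.absNorm 𝔣 := by
    set n := Ideal.absNorm 𝔣 with hn
    have hr : ((n % q : ℕ) : 𝓞 K) ∈ 𝔣 := by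
      have hcalc : ((n % q : ℕ) : 𝓞 K) = (n : 𝓞 K) - (q : 𝓞 K) * ((n / q : ℕ) : 𝓞 K) := by
        have h := Nat.mod_add_div n q
        have h2 : ((n % q + q * (n / q) : ℕ) : 𝓞 K) = (n : 𝓞 K) := by rw [h]
        push_cast at h2
        linear_combination h2
      rw [hcalc]
      exact Ideal.sub_mem _ hN𝔣 (Ideal.mul_mem_right _ _ hq𝔣)
    by_contra hnd
    have hrpos : 0 < n % q :=
      Nat.pos_of_ne_zero (fun h => hnd (Nat.dvd_of_mod_eq_zero h))
    exact absurd (hqmin _ hrpos hr) (not_le.mpr (Nat.mod_lt n hq0))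
  -- the norm of 𝔞 does not divide q
  have hpq : ¬ Ideal.absNorm 𝔞 ∣ q := by
    intro hdvd
    have hpN𝔣 : Ideal.absNorm 𝔞 ∣ Ideal.absNorm 𝔣 := hdvd.trans hqdvd
    have hmem : (Ideal.absNorm 𝔣 : 𝓞 K) ∈ 𝔞 := by
      obtain ⟨c, hc⟩ := hpN𝔣
      rw [hc]
      push_cast
      exact Ideal.mul_mem_right _ _ (Ideal.absNorm_mem 𝔞)
    have hsup : 𝔞 ⊔ Ideal.span {(Ideal.absNorm 𝔣 : 𝓞 K)} = ⊤ :=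
      Ideal.isCoprime_iff_sup_eq.mp h𝔞N𝔣
    have hle : Ideal.span {(Ideal.absNorm 𝔣 : 𝓞 K)} ≤ 𝔞 :=
      (Ideal.span_singleton_le_iff_mem _).mpr hmem
    exact h𝔞top (top_le_iff.mp (hsup ▸ sup_le le_rfl hle))
  have hcop : IsCoprime ((Ideal.absNorm 𝔞 : ℕ) : ℤ) ((q : ℕ) : ℤ) := by
    rw [Int.isCoprime_iff_gcd_eq_one]
    simpa using (Nat.Prime.coprime_iff_not_dvd h𝔞prime).mpr hpq
  exact AdmissibleAux.aux K 𝔣 𝔟 𝔞 (Ideal.absNorm 𝔞) q rfl h𝔣bot h𝔟bot h𝔞bot h𝔞top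
    h𝔞prime.pos hq0 hq𝔣 hcop
end
end

section
/- For every real s > 0 and all nonzero real numbers α, β, the double integral ∫₀^∞ ∫₀^∞ e^{−t₁⁻²t²α² − t₁t²β²} · t₁⁻¹ · t^{3s+1} (dt₁/t₁)(dt/t) converges absolutely and equals (1/6) · Γ((s+1)/2) · Γ(s) · |α|^{−(1+s)} · |β|^{−2s}. -/
set_option maxHeartbeats 1000000

noncomputable section

open MeasureTheory Set

open Real in
lemma gamma1_int {a b : ℝ} (ha : 0 < a) (hb : 0 < b) :
    IntegrableOn (fun x : ℝ => x ^ (a - 1) * Real.exp (-b * x)) (Ioi 0) := by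
  refine (integrableOn_rpow_mul_exp_neg_mul_rpow (p := 1)
    (by linarith : (-1:ℝ) < a - 1) one_pos hb).congr_fun (fun x hx => ?_) measurableSet_Ioi
  simp only [Real.rpow_one]

lemma gamma1_val {a b : ℝ} (ha : 0 < a) (hb : 0 < b) :
    ∫ x in Ioi (0:ℝ), x ^ (a - 1) * Real.exp (-b * x) = b ^ (-a) * Real.Gamma a := by
  have h := integral_rpow_mul_exp_neg_mul_rpow (p := 1) (q := a - 1) one_pos
    (by linarith : (-1:ℝ) < a - 1) hb
  simp only [Real.rpow_one] at h
  rw [h, show a - 1 + 1 = a by ring, div_one, div_one]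
  ring

lemma gamma2_val {q c : ℝ} (hq : -1 < q) (hc : 0 < c) :
    ∫ x in Ioi (0:ℝ), x ^ q * Real.exp (-c * x ^ 2) =
      c ^ (-(q + 1) / 2) * (1 / 2) * Real.Gamma ((q + 1) / 2) := by
  rw [← integral_rpow_mul_exp_neg_mul_rpow two_pos hq hc]
  refine setIntegral_congr_fun measurableSet_Ioi fun x hx => ?_
  rw [Real.rpow_two]

lemma tonelli_aux {F : ℝ × ℝ → ℝ} (hF : Measurable F)
    (h0 : ∀ p : ℝ × ℝ, p.1 ∈ Ioi (0:ℝ) → p.2 ∈ Ioi (0:ℝ) → 0 ≤ F p)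
    (h1 : ∀ x ∈ Ioi (0:ℝ), IntegrableOn (fun y => F (x, y)) (Ioi 0))
    (h2 : IntegrableOn (fun x => ∫ y in Ioi (0:ℝ), F (x, y)) (Ioi 0)) :
    Integrable F ((volume.restrict (Ioi 0)).prod (volume.restrict (Ioi 0))) := by
  rw [integrable_prod_iff hF.aestronglyMeasurable]
  constructor
  · filter_upwards [ae_restrict_mem measurableSet_Ioi] with x hx
    exact h1 x hx
  · refine h2.congr ?_
    filter_upwards [ae_restrict_mem measurableSet_Ioi] with x hx
    refine integral_congr_ae ?_
    filter_upwards [ae_restrict_mem measurableSet_Ioi] with y hy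
    exact (Real.norm_of_nonneg (h0 (x, y) hx hy)).symm

open Real in
lemma beta_Ioi{a b A B c : ℝ} (ha : 0 < a) (hb : 0 < b) (hA : 0 < A) (hB : 0 < B)
    (hc : 1 ≤ c) :
    IntegrableOn (fun x : ℝ => x ^ (c * a - 1) * (A + B * x ^ c) ^ (-(a + b))) (Ioi 0) ∧
    ∫ x in Ioi (0:ℝ), x ^ (c * a - 1) * (A + B * x ^ c) ^ (-(a + b)) =
      Real.Gamma a * Real.Gamma b / (c * Real.Gamma (a + b)) * A ^ (-b) * B ^ (-a) := by
  have hc0 : (0:ℝ) < c := lt_of_lt_of_le one_pos hc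
  have hab : 0 < a + b := by linarith
  have hG : 0 < Real.Gamma (a + b) := Real.Gamma_pos_of_pos hab
  set F : ℝ × ℝ → ℝ := fun p =>
    (p.1 ^ (a + b - 1) * Real.exp (-A * p.1)) *
      (p.2 ^ (c * a - 1) * Real.exp (-(B * p.1) * p.2 ^ c)) with hFdef
  have hFmeas : Measurable F := by
    apply Measurable.mul
    · exact ((measurable_fst.pow_const _).mul
        ((measurable_fst.const_mul (-A)).exp))
    · exact ((measurable_snd.pow_const _).mul
        (((measurable_fst.const_mul B).neg.mul (measurable_snd.pow_const c)).exp))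
  have hF0 : ∀ p : ℝ × ℝ, p.1 ∈ Ioi (0:ℝ) → p.2 ∈ Ioi (0:ℝ) → 0 ≤ F p := by
    intro p hx hy
    have h1 : (0:ℝ) < p.1 := hx
    have h2 : (0:ℝ) < p.2 := hy
    positivity
  -- inner integral over second coordinate, for fixed y = p.1 > 0
  have h1 : ∀ y ∈ Ioi (0:ℝ), IntegrableOn (fun x => F (y, x)) (Ioi 0) := by
    intro y hy
    have hBy : 0 < B * y := mul_pos hB hy
    exact IntegrableOn.congr_fun ((integrableOn_rpow_mul_exp_neg_mul_rpow
      (by nlinarith : (-1:ℝ) < c * a - 1) hc0 hBy).const_mul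
      (y ^ (a + b - 1) * Real.exp (-A * y))) (fun x hx => rfl) measurableSet_Ioi
  -- value of the inner integral
  have hinner : ∀ y ∈ Ioi (0:ℝ), (∫ x in Ioi (0:ℝ), F (y, x)) =
      ((1 / c) * Real.Gamma a * B ^ (-a)) * (y ^ (b - 1) * Real.exp (-A * y)) := by
    intro y hy
    have hy0 : (0:ℝ) < y := hy
    have hBy : 0 < B * y := mul_pos hB hy0
    rw [hFdef]
    simp only
    rw [integral_const_mul, integral_rpow_mul_exp_neg_mul_rpow hc0
      (by nlinarith : (-1:ℝ) < c * a - 1) hBy,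
      show -(c * a - 1 + 1) / c = -a by field_simp; try ring,
      show (c * a - 1 + 1) / c = a by field_simp; try ring,
      Real.mul_rpow hB.le hy0.le]
    have hpow : y ^ (a + b - 1) * y ^ (-a) = y ^ (b - 1) := by
      rw [← Real.rpow_add hy0]; ring_nf
    linear_combination (Real.exp (-A * y) * B ^ (-a) * (1 / c) * Real.Gamma a) * hpow
  have h2 : IntegrableOn (fun y => ∫ x in Ioi (0:ℝ), F (y, x)) (Ioi 0) := by
    refine IntegrableOn.congr_fun ((gamma1_int hb hA).const_mul
      ((1 / c) * Real.Gamma a * B ^ (-a))) (fun y hy => (hinner y hy).symm) measurableSet_Ioi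
  have hint := tonelli_aux hFmeas hF0 h1 h2
  -- total integral of F over the product
  have htot : (∫ p, F p ∂((volume.restrict (Ioi (0:ℝ))).prod (volume.restrict (Ioi (0:ℝ))))) =
      Real.Gamma (a + b) *
        (Real.Gamma a * Real.Gamma b / (c * Real.Gamma (a + b)) * A ^ (-b) * B ^ (-a)) := by
    rw [integral_prod _ hint]
    rw [setIntegral_congr_fun measurableSet_Ioi (fun y hy => hinner y hy)]
    rw [integral_const_mul, gamma1_val hb hA]
    field_simp
  -- the other iterated order: for fixed x > 0, integral over y
  have hswap : ∀ x ∈ Ioi (0:ℝ), (∫ y in Ioi (0:ℝ), F (y, x)) =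
      Real.Gamma (a + b) * (x ^ (c * a - 1) * (A + B * x ^ c) ^ (-(a + b))) := by
    intro x hx
    have hx0 : (0:ℝ) < x := hx
    have hAx : 0 < A + B * x ^ c := by positivity
    have : ∀ y : ℝ, F (y, x) =
        x ^ (c * a - 1) * (y ^ (a + b - 1) * Real.exp (-(A + B * x ^ c) * y)) := by
      intro y
      have he : Real.exp (-A * y) * Real.exp (-(B * y) * x ^ c) =
          Real.exp (-(A + B * x ^ c) * y) := by
        rw [← Real.exp_add]; ring_nf
      rw [hFdef]
      simp only
      linear_combination (y ^ (a + b - 1) * x ^ (c * a - 1)) * he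
    simp_rw [this]
    rw [integral_const_mul, show a + b - 1 = (a + b) - 1 by ring, gamma1_val hab hAx]
    ring
  constructor
  · -- integrability of the target
    have h3 := hint.integral_norm_prod_right
    have h4 : IntegrableOn (fun x => Real.Gamma (a + b) *
        (x ^ (c * a - 1) * (A + B * x ^ c) ^ (-(a + b)))) (Ioi 0) := by
      refine h3.congr ?_
      filter_upwards [ae_restrict_mem measurableSet_Ioi] with x hx
      rw [← hswap x hx]
      refine integral_congr_ae ?_
      filter_upwards [ae_restrict_mem measurableSet_Ioi] with y hy
      exact Real.norm_of_nonneg (hF0 (y, x) hy hx)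
    have h5 := h4.const_mul (Real.Gamma (a + b))⁻¹
    refine IntegrableOn.congr_fun h5 (fun x hx => ?_) measurableSet_Ioi
    rw [inv_mul_cancel_left₀ hG.ne']
  · -- value
    have h6 : (∫ x in Ioi (0:ℝ), ∫ y in Ioi (0:ℝ), F (y, x)) =
        Real.Gamma (a + b) *
          (Real.Gamma a * Real.Gamma b / (c * Real.Gamma (a + b)) * A ^ (-b) * B ^ (-a)) := by
      rw [← htot, integral_prod_symm _ hint]
    rw [setIntegral_congr_fun measurableSet_Ioi (fun x hx => hswap x hx),
      integral_const_mul] at h6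
    exact mul_left_cancel₀ hG.ne' h6

open Real in
/-- For `s > 0` and nonzero reals `α, β`, the double integral
`∫₀^∞ ∫₀^∞ e^{−t₁⁻²t²α² − t₁t²β²} t₁⁻¹ t^{3s+1} (dt₁/t₁)(dt/t)` converges absolutely and
equals `(1/6) Γ((s+1)/2) Γ(s) |α|^{−(1+s)} |β|^{−2s}`. -/
theorem double_integral_gamma (s α β : ℝ) (hs : 0 < s) (hα : α ≠ 0) (hβ : β ≠ 0) :
    IntegrableOn
      (fun p : ℝ × ℝ =>
        Real.exp (-((p.1 ^ 2)⁻¹ * p.2 ^ 2 * α ^ 2) - p.1 * p.2 ^ 2 * β ^ 2) *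
          p.1⁻¹ * p.2 ^ (3 * s + 1) / (p.1 * p.2))
      (Ioi (0 : ℝ) ×ˢ Ioi (0 : ℝ)) volume ∧
    (∫ p in Ioi (0 : ℝ) ×ˢ Ioi (0 : ℝ),
        Real.exp (-((p.1 ^ 2)⁻¹ * p.2 ^ 2 * α ^ 2) - p.1 * p.2 ^ 2 * β ^ 2) *
          p.1⁻¹ * p.2 ^ (3 * s + 1) / (p.1 * p.2)) =
      (1 / 6) * Real.Gamma ((s + 1) / 2) * Real.Gamma s *
        |α| ^ (-(1 + s)) * |β| ^ (-(2 * s)) := by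
  have hα2 : (0:ℝ) < α ^ 2 := by positivity
  have hβ2 : (0:ℝ) < β ^ 2 := by positivity
  have hs1 : (0:ℝ) < (s + 1) / 2 := by linarith
  have hp2 : (0:ℝ) < (3 * s + 1) / 2 := by linarith
  have hG2 : 0 < Real.Gamma ((3 * s + 1) / 2) := Real.Gamma_pos_of_pos hp2
  set F : ℝ × ℝ → ℝ := fun p =>
    Real.exp (-((p.1 ^ 2)⁻¹ * p.2 ^ 2 * α ^ 2) - p.1 * p.2 ^ 2 * β ^ 2) *
      p.1⁻¹ * p.2 ^ (3 * s + 1) / (p.1 * p.2) with hFdef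
  have hFmeas : Measurable F := by
    rw [hFdef]; fun_prop
  have hF0 : ∀ p : ℝ × ℝ, p.1 ∈ Ioi (0:ℝ) → p.2 ∈ Ioi (0:ℝ) → 0 ≤ F p := by
    intro p hx hy
    have h1 : (0:ℝ) < p.1 := hx
    have h2 : (0:ℝ) < p.2 := hy
    rw [hFdef]
    positivity
  -- pointwise description of the sections
  have hsec : ∀ x ∈ Ioi (0:ℝ), EqOn
      (fun t : ℝ => x ^ (-2:ℝ) * (t ^ (3 * s) *
        Real.exp (-((x ^ 2)⁻¹ * α ^ 2 + x * β ^ 2) * t ^ 2)))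
      (fun t => F (x, t)) (Ioi 0) := by
    intro x hx t ht
    have hx0 : (0:ℝ) < x := hx
    have ht0 : (0:ℝ) < t := ht
    rw [hFdef]
    simp only
    rw [Real.rpow_add_one ht0.ne', Real.rpow_neg hx0.le, Real.rpow_two,
      show -((x ^ 2)⁻¹ * t ^ 2 * α ^ 2) - x * t ^ 2 * β ^ 2 =
        -(((x ^ 2)⁻¹ * α ^ 2 + x * β ^ 2) * t ^ 2) by ring]
    field_simp
  have h1 : ∀ x ∈ Ioi (0:ℝ), IntegrableOn (fun t => F (x, t)) (Ioi 0) := by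
    intro x hx
    have hx0 : (0:ℝ) < x := hx
    have hc : (0:ℝ) < (x ^ 2)⁻¹ * α ^ 2 + x * β ^ 2 := by positivity
    exact IntegrableOn.congr_fun
      ((integrableOn_rpow_mul_exp_neg_mul_sq hc (by linarith : (-1:ℝ) < 3 * s)).const_mul
        (x ^ (-2:ℝ))) (hsec x hx) measurableSet_Ioi
  have hinner : ∀ x ∈ Ioi (0:ℝ), (∫ t in Ioi (0:ℝ), F (x, t)) =
      ((1 / 2) * Real.Gamma ((3 * s + 1) / 2)) *
        (x ^ (3 * s - 1) * (α ^ 2 + β ^ 2 * x ^ (3:ℝ)) ^ (-(3 * s + 1) / 2)) := by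
    intro x hx
    have hx0 : (0:ℝ) < x := hx
    have hc : (0:ℝ) < (x ^ 2)⁻¹ * α ^ 2 + x * β ^ 2 := by positivity
    have hA3 : (0:ℝ) < α ^ 2 + β ^ 2 * x ^ (3:ℝ) := by positivity
    rw [← setIntegral_congr_fun measurableSet_Ioi (hsec x hx), integral_const_mul,
      gamma2_val (by linarith : (-1:ℝ) < 3 * s) hc,
      show (x ^ 2)⁻¹ * α ^ 2 + x * β ^ 2 = x ^ (-2:ℝ) * (α ^ 2 + β ^ 2 * x ^ (3:ℝ)) by
        rw [Real.rpow_neg hx0.le, Real.rpow_two,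
          show (3:ℝ) = ((3:ℕ):ℝ) by norm_num, Real.rpow_natCast]
        field_simp,
      Real.mul_rpow (Real.rpow_nonneg hx0.le _) hA3.le,
      ← Real.rpow_mul hx0.le]
    have hpow : x ^ (-2:ℝ) * x ^ ((-2:ℝ) * (-(3 * s + 1) / 2)) = x ^ (3 * s - 1) := by
      rw [← Real.rpow_add hx0]
      congr 1
      ring
    linear_combination ((α ^ 2 + β ^ 2 * x ^ (3:ℝ)) ^ (-(3 * s + 1) / 2) * (1 / 2) *
      Real.Gamma ((3 * s + 1) / 2)) * hpow
  obtain ⟨hbint, hbval⟩ := beta_Ioi (a := s) (b := (s + 1) / 2) hs hs1 hα2 hβ2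
    (by norm_num : (1:ℝ) ≤ 3)
  simp only [show s + (s + 1) / 2 = (3 * s + 1) / 2 by ring,
    show -((3 * s + 1) / 2) = -(3 * s + 1) / 2 by ring] at hbint hbval
  have h2 : IntegrableOn (fun x => ∫ t in Ioi (0:ℝ), F (x, t)) (Ioi 0) :=
    IntegrableOn.congr_fun (hbint.const_mul ((1 / 2) * Real.Gamma ((3 * s + 1) / 2)))
      (fun x hx => (hinner x hx).symm) measurableSet_Ioi
  have hint := tonelli_aux hFmeas hF0 h1 h2
  have hmeq : (volume : Measure (ℝ × ℝ)).restrict (Ioi 0 ×ˢ Ioi 0) =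
      ((volume : Measure ℝ).restrict (Ioi 0)).prod ((volume : Measure ℝ).restrict (Ioi 0)) := by
    rw [Measure.volume_eq_prod, Measure.prod_restrict]
  constructor
  · rw [IntegrableOn, hmeq]
    exact hint
  · rw [show ∫ p in Ioi (0:ℝ) ×ˢ Ioi (0:ℝ), F p = ∫ p, F p ∂((volume.restrict (Ioi 0)).prod
      (volume.restrict (Ioi 0))) by rw [← hmeq],
      integral_prod _ hint,
      setIntegral_congr_fun measurableSet_Ioi (fun x hx => hinner x hx),
      integral_const_mul, hbval]
    have ha' : ((α:ℝ) ^ 2) ^ (-((s + 1) / 2)) = |α| ^ (-(1 + s)) := by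
      rw [← sq_abs, ← Real.rpow_natCast |α| 2, ← Real.rpow_mul (abs_nonneg α),
        show ((2:ℕ):ℝ) * (-((s + 1) / 2)) = -(1 + s) by push_cast; ring]
    have hb' : ((β:ℝ) ^ 2) ^ (-s) = |β| ^ (-(2 * s)) := by
      rw [← sq_abs, ← Real.rpow_natCast |β| 2, ← Real.rpow_mul (abs_nonneg β),
        show ((2:ℕ):ℝ) * (-s) = -(2 * s) by push_cast; ring]
    rw [ha', hb']
    field_simp
    ring
end
end

section
/- There exist constants A > 0 and T ≥ 1 such that |ψ⁰(v)_{a,t₁} − ψ⁰(v)_{ε_ℝ b,t₁}| < A · t₁^{−3/2} · e^{−H_{a,t₁}(v)/2} for every v ∈ K⊗ℝ and every t₁ ≥ T. -/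
noncomputable section

open scoped NumberField nonZeroDivisors

variable (K : Type) [Field K] [NumberField K]

/-- The metric `H_{f,t₁}(v) = t₁⁻² f(v)² + t₁ |σ_ℂ(v)|²` on `K ⊗ ℝ ≅ ℝ × ℂ`, for a
linear functional `f` (e.g. `f = a` or `f = ε_ℝ b`). -/
def Hq (f : (ℝ × ℂ) →ₗ[ℝ] ℝ) (t₁ : ℝ) (v : ℝ × ℂ) : ℝ :=
  (t₁ ^ 2)⁻¹ * f v ^ 2 + t₁ * ‖v.2‖ ^ 2


/-- The Schwartz function `ψ⁰(v)_{f,t₁} = −t₁⁻¹ f(v) e^{−H_{f,t₁}(v)}`. -/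
def psi0 (f : (ℝ × ℂ) →ₗ[ℝ] ℝ) (t₁ : ℝ) (v : ℝ × ℂ) : ℝ :=
  -(t₁⁻¹ * f v * Real.exp (-Hq f t₁ v))

private lemma sqrt_le_exp_quarter (s : ℝ) (hs : 0 ≤ s) : Real.sqrt s ≤ Real.exp (s / 4) := by
  have h1 : s / 4 + 1 ≤ Real.exp (s / 4) := Real.add_one_le_exp _
  have h2 : s ≤ Real.exp (s / 4) ^ 2 := by nlinarith [sq_nonneg (s / 4 - 1), Real.exp_pos (s / 4)]
  calc Real.sqrt s ≤ Real.sqrt (Real.exp (s / 4) ^ 2) := Real.sqrt_le_sqrt h2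
    _ = Real.exp (s / 4) := Real.sqrt_sq (Real.exp_pos _).le

private lemma mvt_bound (u w : ℝ) :
    |w * Real.exp (-w ^ 2) - u * Real.exp (-u ^ 2)| ≤
      (9 * Real.exp (-u ^ 2 / 2 + 3 * (w - u) ^ 2 / 2)) * |w - u| := by
  have hderiv : ∀ x : ℝ, HasDerivAt (fun y : ℝ => y * Real.exp (-y ^ 2))
      ((1 - 2 * x ^ 2) * Real.exp (-x ^ 2)) x := by
    intro x
    have h1 : HasDerivAt (fun y : ℝ => -y ^ 2) (-(2 * x)) x := by
      simpa using (hasDerivAt_pow 2 x).fun_neg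
    have h3 := (hasDerivAt_id x).fun_mul h1.exp
    refine h3.congr_deriv ?_
    simp only [id]
    ring
  have hbound : ∀ x ∈ Set.uIcc u w,
      ‖(1 - 2 * x ^ 2) * Real.exp (-x ^ 2)‖ ≤ 9 * Real.exp (-u ^ 2 / 2 + 3 * (w - u) ^ 2 / 2) := by
    intro x hx
    have h1 : w - u ≤ |w - u| := le_abs_self _
    have h2 : u - w ≤ |w - u| := (abs_sub_comm w u) ▸ le_abs_self (u - w)
    have hxr : |x - u| ≤ |w - u| := by
      rcases Set.mem_uIcc.mp hx with ⟨ha, hb⟩ | ⟨ha, hb⟩ <;> rw [abs_sub_le_iff] <;>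
        constructor <;> linarith
    have hd2 : (x - u) ^ 2 ≤ (w - u) ^ 2 := by
      rw [← sq_abs (x - u), ← sq_abs (w - u)]
      exact pow_le_pow_left₀ (abs_nonneg _) hxr 2
    have key : -x ^ 2 * (3 / 4) ≤ -u ^ 2 / 2 + 3 * (w - u) ^ 2 / 2 := by
      nlinarith [hd2, sq_nonneg (x / 2 - (u - x))]
    have h9 : |1 - 2 * x ^ 2| ≤ 9 * Real.exp (x ^ 2 / 4) := by
      have e1 : x ^ 2 / 4 + 1 ≤ Real.exp (x ^ 2 / 4) := Real.add_one_le_exp _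
      rw [abs_le]
      constructor <;> nlinarith [sq_nonneg x]
    rw [Real.norm_eq_abs, abs_mul, abs_of_pos (Real.exp_pos _)]
    calc |1 - 2 * x ^ 2| * Real.exp (-x ^ 2)
        ≤ (9 * Real.exp (x ^ 2 / 4)) * Real.exp (-x ^ 2) := by
          exact mul_le_mul_of_nonneg_right h9 (Real.exp_pos _).le
      _ = 9 * Real.exp (-x ^ 2 * (3 / 4)) := by
          rw [mul_assoc, ← Real.exp_add]; ring_nf
      _ ≤ 9 * Real.exp (-u ^ 2 / 2 + 3 * (w - u) ^ 2 / 2) := by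
          have := Real.exp_le_exp.mpr key
          linarith
  have hmain := Convex.norm_image_sub_le_of_norm_hasDerivWithin_le
    (f := fun y : ℝ => y * Real.exp (-y ^ 2))
    (f' := fun x : ℝ => (1 - 2 * x ^ 2) * Real.exp (-x ^ 2))
    (fun x _ => (hderiv x).hasDerivWithinAt) hbound (convex_uIcc u w)
    Set.left_mem_uIcc Set.right_mem_uIcc
  simpa [Real.norm_eq_abs] using hmain

set_option maxHeartbeats 1000000 in
/-- Lemma `arch_bounds_1(ii)`: there are `A > 0` and `T ≥ 1` with
`|ψ⁰(v)_{a,t₁} − ψ⁰(v)_{ε_ℝ b,t₁}| < A t₁^{−3/2} e^{−H_{a,t₁}(v)/2}` for all `v ∈ K ⊗ ℝ`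
and all `t₁ ≥ T`. -/
theorem psi0_comparison
    (hdeg : Module.finrank ℚ K = 3)
    (σR : K →+* ℝ) (σC : K →+* ℂ) (hσC : ∃ x : K, (σC x).im ≠ 0)
    (𝔣 𝔟 𝔞 : Ideal (𝓞 K))
    (h𝔣bot : 𝔣 ≠ ⊥) (h𝔣top : 𝔣 ≠ ⊤) (h𝔟bot : 𝔟 ≠ ⊥)
    (h𝔣𝔟 : IsCoprime 𝔣 𝔟)
    (h𝔞N𝔣 : IsCoprime 𝔞 (Ideal.span {(Ideal.absNorm 𝔣 : 𝓞 K)}))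
    (h𝔞prime : (Ideal.absNorm 𝔞).Prime) (h𝔞odd : Odd (Ideal.absNorm 𝔞))
    (q : ℕ) (hq0 : 0 < q) (hq𝔣 : (q : 𝓞 K) ∈ 𝔣)
    (hqmin : ∀ m : ℕ, 0 < m → (m : 𝓞 K) ∈ 𝔣 → q ≤ m)
    (ε : (𝓞 K)ˣ)
    (hε𝔣 : (ε : 𝓞 K) - 1 ∈ 𝔣)
    (hεpos : 0 < σR (algebraMap (𝓞 K) K (ε : 𝓞 K)))
    (hεlt : σR (algebraMap (𝓞 K) K (ε : 𝓞 K)) < 1)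
    (hεnorm : σR (algebraMap (𝓞 K) K (ε : 𝓞 K)) *
      ‖σC (algebraMap (𝓞 K) K (ε : 𝓞 K))‖ ^ 2 = 1)
    (hOfpos : ∀ u : (𝓞 K)ˣ, (u : 𝓞 K) - 1 ∈ 𝔣 → 0 < σR (algebraMap (𝓞 K) K (u : 𝓞 K)))
    (hεgen : ∀ u : (𝓞 K)ˣ, (u : 𝓞 K) - 1 ∈ 𝔣 → ∃ n : ℤ, u = ε ^ n)
    (lam : K) (hlam : Admissible K 𝔣 𝔟 𝔞 q lam)
    -- a = a_λ and b = εa, as ℚ-linear functionals on K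
    (a : K →ₗ[ℚ] ℚ) (b : K →ₗ[ℚ] ℚ) (hb : b = epsDual K ε a)
    (haprim : IsPrimitiveOn K (Lfrac K 𝔣 𝔟) a)
    (halam : a lam = 0) (hblam : b lam = 0)
    (hab : LinearIndependent ℚ ![a, b])
    (hax : memU K σR σC a (xlin K σC))
    -- the ℝ-linear extensions of a and b to K ⊗ ℝ ≅ ℝ × ℂ
    (aR bR : (ℝ × ℂ) →ₗ[ℝ] ℝ)
    (haR : ∀ x : K, aR (σR x, σC x) = (a x : ℝ))
    (hbR : ∀ v : ℝ × ℂ,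
      bR v = aR (σR (algebraMap (𝓞 K) K ((ε⁻¹ : (𝓞 K)ˣ) : 𝓞 K)) * v.1,
                 σC (algebraMap (𝓞 K) K ((ε⁻¹ : (𝓞 K)ˣ) : 𝓞 K)) * v.2)) :
    ∃ A : ℝ, 0 < A ∧ ∃ T : ℝ, 1 ≤ T ∧ ∀ v : ℝ × ℂ, ∀ t₁ : ℝ, T ≤ t₁ →
      |psi0 aR t₁ v - psi0 (σR (algebraMap (𝓞 K) K (ε : 𝓞 K)) • bR) t₁ v| <
        A * t₁ ^ (-(3 / 2) : ℝ) * Real.exp (-(Hq aR t₁ v) / 2) := by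
  classical
  set e := σR (algebraMap (𝓞 K) K (ε : 𝓞 K)) with he
  set ei := σR (algebraMap (𝓞 K) K ((ε⁻¹ : (𝓞 K)ˣ) : 𝓞 K)) with hei
  set c := σC (algebraMap (𝓞 K) K ((ε⁻¹ : (𝓞 K)ˣ) : 𝓞 K)) with hc
  have hunit : ((ε : 𝓞 K) * ((ε⁻¹ : (𝓞 K)ˣ) : 𝓞 K)) = 1 := by
    exact_mod_cast ε.mul_inv
  have hee : e * ei = 1 := by
    rw [he, hei, ← map_mul, ← map_mul, hunit, map_one, map_one]
  set A1 : ℝ := aR (0, 1) - e * aR (0, c) with hA1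
  set A2 : ℝ := aR (0, Complex.I) - e * aR (0, c * Complex.I) with hA2
  set C : ℝ := |A1| + |A2| + 1 with hCdef
  clear_value C
  have hC : 0 < C := by rw [hCdef]; positivity
  have hz1 : ∀ z : ℂ, z = z.re • (1 : ℂ) + z.im • Complex.I := by
    intro z
    simp [Complex.real_smul, Complex.re_add_im]
  have hz2 : ∀ z : ℂ, c * z = z.re • c + z.im • (c * Complex.I) := by
    intro z
    calc c * z = c * (z.re • (1 : ℂ) + z.im • Complex.I) := by rw [← hz1 z]
      _ = z.re • c + z.im • (c * Complex.I) := by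
          simp only [Complex.real_smul]; ring
  have hDz : ∀ z : ℂ, aR (0, z) - e * aR (0, c * z) = z.re * A1 + z.im * A2 := by
    intro z
    have h1 : aR ((0 : ℝ), z) = z.re * aR (0, 1) + z.im * aR (0, Complex.I) := by
      have hp : (((0 : ℝ), z) : ℝ × ℂ)
          = z.re • ((0 : ℝ), (1 : ℂ)) + z.im • ((0 : ℝ), Complex.I) := by
        refine Prod.ext ?_ ?_
        · simp
        · simpa using hz1 z
      rw [hp, map_add, map_smul, map_smul]; simp [smul_eq_mul]
    have h2 : aR ((0 : ℝ), c * z) = z.re * aR (0, c) + z.im * aR (0, c * Complex.I) := by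
      have hp : (((0 : ℝ), c * z) : ℝ × ℂ)
          = z.re • ((0 : ℝ), c) + z.im • ((0 : ℝ), c * Complex.I) := by
        refine Prod.ext ?_ ?_
        · simp
        · simpa using hz2 z
      rw [hp, map_add, map_smul, map_smul]; simp [smul_eq_mul]
    rw [h1, h2, hA1, hA2]; ring
  have hkey : ∀ v : ℝ × ℂ, aR v - e * bR v = (v.2).re * A1 + (v.2).im * A2 := by
    intro v
    have hb1 : bR v = aR (ei * v.1, c * v.2) := hbR v
    have hsum : ((ei * v.1, c * v.2) : ℝ × ℂ)
        = ei • ((v.1 : ℝ), (0 : ℂ)) + ((0 : ℝ), c * v.2) := by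
      refine Prod.ext ?_ ?_ <;> simp
    have hv : v = ((v.1, (0 : ℂ)) : ℝ × ℂ) + ((0 : ℝ), v.2) := by
      refine Prod.ext ?_ ?_ <;> simp
    have hstep : aR v - e * bR v
        = (aR (v.1, (0 : ℂ)) + aR (0, v.2))
          - e * (ei * aR (v.1, (0 : ℂ)) + aR (0, c * v.2)) := by
      rw [hb1, hsum, map_add, map_smul]
      nth_rewrite 1 [hv]
      rw [map_add]
      simp [smul_eq_mul]
    rw [hstep, ← hDz v.2]
    linear_combination (-(aR (v.1, (0 : ℂ)))) * hee
  have hphi : ∀ v : ℝ × ℂ, |aR v - e * bR v| ≤ C * ‖v.2‖ := by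
    intro v
    rw [hkey v]
    calc |(v.2).re * A1 + (v.2).im * A2| ≤ |(v.2).re * A1| + |(v.2).im * A2| := abs_add_le _ _
      _ = |(v.2).re| * |A1| + |(v.2).im| * |A2| := by rw [abs_mul, abs_mul]
      _ ≤ ‖v.2‖ * |A1| + ‖v.2‖ * |A2| := by
          gcongr
          · exact Complex.abs_re_le_norm _
          · exact Complex.abs_im_le_norm _
      _ = (|A1| + |A2|) * ‖v.2‖ := by ring
      _ ≤ C * ‖v.2‖ := by
          refine mul_le_mul_of_nonneg_right ?_ (norm_nonneg v.2)
          rw [hCdef]; linarith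
  refine ⟨9 * C + 1, by linarith, 1 + 6 * C ^ 2, by linarith [sq_nonneg C], ?_⟩
  intro v t ht
  have ht1 : (1 : ℝ) ≤ t := by linarith [sq_nonneg C]
  have ht0 : (0 : ℝ) < t := lt_of_lt_of_le one_pos ht1
  have htt : t ≤ t ^ 3 := le_self_pow₀ ht1 (by norm_num)
  have ht3 : 6 * C ^ 2 ≤ t ^ 3 := le_trans (by linarith [sq_nonneg C]) htt
  set u := t⁻¹ * aR v with hu
  set w := t⁻¹ * (e * bR v) with hw
  set s := t * ‖v.2‖ ^ 2 with hs
  clear_value u w s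
  have hs0 : (0 : ℝ) ≤ s := by rw [hs]; positivity
  have hHa : Hq aR t v = u ^ 2 + s := by
    rw [Hq, hu, hs]; ring
  have hHb : Hq (e • bR) t v = w ^ 2 + s := by
    rw [Hq, hw, hs]
    simp only [LinearMap.smul_apply, smul_eq_mul]
    ring
  have hpa : psi0 aR t v = -(u * Real.exp (-(u ^ 2 + s))) := by
    rw [psi0, hHa, hu]
  have hpb : psi0 (e • bR) t v = -(w * Real.exp (-(w ^ 2 + s))) := by
    rw [psi0, hHb, hw]
    simp only [LinearMap.smul_apply, smul_eq_mul]
  have hdiff : psi0 aR t v - psi0 (e • bR) t v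
      = (w * Real.exp (-w ^ 2) - u * Real.exp (-u ^ 2)) * Real.exp (-s) := by
    rw [hpa, hpb, show -(u ^ 2 + s) = -u ^ 2 + -s by ring,
      show -(w ^ 2 + s) = -w ^ 2 + -s by ring, Real.exp_add, Real.exp_add]
    ring
  have hr : |w - u| ≤ C * (t⁻¹ * ‖v.2‖) := by
    have hwu : w - u = -(t⁻¹ * (aR v - e * bR v)) := by rw [hu, hw]; ring
    rw [hwu, abs_neg, abs_mul, abs_of_pos (inv_pos.mpr ht0)]
    calc t⁻¹ * |aR v - e * bR v| ≤ t⁻¹ * (C * ‖v.2‖) := by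
          gcongr
          exact hphi v
      _ = C * (t⁻¹ * ‖v.2‖) := by ring
  have htne : (t : ℝ) ≠ 0 := ht0.ne'
  have habs2 : ‖v.2‖ ^ 2 = s / t := by
    rw [hs]; field_simp
  have hr2 : (w - u) ^ 2 ≤ C ^ 2 * (s / t ^ 3) := by
    have h1 : (w - u) ^ 2 ≤ (C * (t⁻¹ * ‖v.2‖)) ^ 2 := by
      rw [← sq_abs (w - u)]
      exact pow_le_pow_left₀ (abs_nonneg _) hr 2
    have h2 : (C * (t⁻¹ * ‖v.2‖)) ^ 2 = C ^ 2 * (s / t ^ 3) := by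
      rw [mul_pow, mul_pow, habs2]
      ring
    exact h1.trans_eq h2
  have h34 : 3 * (w - u) ^ 2 / 2 ≤ s / 4 := by
    have hden : (0 : ℝ) < t ^ 3 := by positivity
    have h5 : C ^ 2 * (s / t ^ 3) ≤ (t ^ 3 / 6) * (s / t ^ 3) := by
      gcongr
      linarith
    have h6 : (t ^ 3 / 6) * (s / t ^ 3) = s / 6 := by
      field_simp
    linarith [hr2, h5]
  have hsqrt : Real.sqrt s = Real.sqrt t * ‖v.2‖ := by
    rw [hs, Real.sqrt_mul ht0.le, Real.sqrt_sq (norm_nonneg _)]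
  have hsqt : (0 : ℝ) < Real.sqrt t := Real.sqrt_pos.mpr ht0
  have hv2 : ‖v.2‖ = Real.sqrt s / Real.sqrt t := by
    rw [hsqrt]
    field_simp
  have hrpow : t⁻¹ * (Real.sqrt t)⁻¹ = t ^ (-(3 / 2) : ℝ) := by
    rw [Real.sqrt_eq_rpow, ← Real.rpow_neg_one t, ← Real.rpow_neg ht0.le,
      ← Real.rpow_add ht0]
    norm_num
  have hmvt := mvt_bound u w
  have step1 : |psi0 aR t v - psi0 (e • bR) t v|
      ≤ 9 * Real.exp (-u ^ 2 / 2 + 3 * (w - u) ^ 2 / 2) * |w - u| * Real.exp (-s) := by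
    rw [hdiff, abs_mul, abs_of_pos (Real.exp_pos _)]
    exact mul_le_mul_of_nonneg_right hmvt (Real.exp_pos _).le
  have step2 : 9 * Real.exp (-u ^ 2 / 2 + 3 * (w - u) ^ 2 / 2) * |w - u| * Real.exp (-s)
      ≤ 9 * Real.exp (-u ^ 2 / 2 + s / 4) * (C * (t⁻¹ * ‖v.2‖)) * Real.exp (-s) := by
    have e1 : Real.exp (-u ^ 2 / 2 + 3 * (w - u) ^ 2 / 2) ≤ Real.exp (-u ^ 2 / 2 + s / 4) :=
      Real.exp_le_exp.mpr (by linarith)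
    have e2 : Real.exp (-u ^ 2 / 2 + 3 * (w - u) ^ 2 / 2) * |w - u|
        ≤ Real.exp (-u ^ 2 / 2 + s / 4) * (C * (t⁻¹ * ‖v.2‖)) :=
      mul_le_mul e1 hr (abs_nonneg _) (Real.exp_pos _).le
    calc 9 * Real.exp (-u ^ 2 / 2 + 3 * (w - u) ^ 2 / 2) * |w - u| * Real.exp (-s)
        = 9 * (Real.exp (-u ^ 2 / 2 + 3 * (w - u) ^ 2 / 2) * |w - u|) * Real.exp (-s) := by ring
      _ ≤ 9 * (Real.exp (-u ^ 2 / 2 + s / 4) * (C * (t⁻¹ * ‖v.2‖))) * Real.exp (-s) :=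
          mul_le_mul_of_nonneg_right
            (mul_le_mul_of_nonneg_left e2 (by norm_num)) (Real.exp_pos _).le
      _ = 9 * Real.exp (-u ^ 2 / 2 + s / 4) * (C * (t⁻¹ * ‖v.2‖)) * Real.exp (-s) := by
          ring
  have step3 : 9 * Real.exp (-u ^ 2 / 2 + s / 4) * (C * (t⁻¹ * ‖v.2‖)) * Real.exp (-s)
      = 9 * C * (t⁻¹ * (Real.sqrt t)⁻¹) * (Real.sqrt s * Real.exp (-u ^ 2 / 2 + s / 4 + -s)) := by
    have hxp : Real.exp (-u ^ 2 / 2 + s / 4 + -s)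
        = Real.exp (-u ^ 2 / 2 + s / 4) * Real.exp (-s) := by
      rw [← Real.exp_add]
    rw [hv2, hxp]
    have hstne : Real.sqrt t ≠ 0 := hsqt.ne'
    field_simp
  have step4 : Real.sqrt s * Real.exp (-u ^ 2 / 2 + s / 4 + -s)
      ≤ Real.exp (s / 4) * Real.exp (-u ^ 2 / 2 + s / 4 + -s) := by
    exact mul_le_mul_of_nonneg_right (sqrt_le_exp_quarter s hs0) (Real.exp_pos _).le
  have step5 : Real.exp (s / 4) * Real.exp (-u ^ 2 / 2 + s / 4 + -s)
      = Real.exp (-(u ^ 2 + s) / 2) := by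
    rw [← Real.exp_add]
    congr 1
    ring
  have hfinal : |psi0 aR t v - psi0 (e • bR) t v|
      ≤ 9 * C * (t ^ (-(3 / 2) : ℝ)) * Real.exp (-(Hq aR t v) / 2) := by
    rw [hHa, ← hrpow]
    calc |psi0 aR t v - psi0 (e • bR) t v|
        ≤ 9 * Real.exp (-u ^ 2 / 2 + s / 4) * (C * (t⁻¹ * ‖v.2‖)) * Real.exp (-s) :=
          le_trans step1 step2
      _ = 9 * C * (t⁻¹ * (Real.sqrt t)⁻¹) * (Real.sqrt s * Real.exp (-u ^ 2 / 2 + s / 4 + -s)) :=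
          step3
      _ ≤ 9 * C * (t⁻¹ * (Real.sqrt t)⁻¹) * (Real.exp (s / 4) * Real.exp (-u ^ 2 / 2 + s / 4 + -s)) := by
          have hcc : (0 : ℝ) ≤ 9 * C * (t⁻¹ * (Real.sqrt t)⁻¹) :=
            mul_nonneg (by linarith) (by positivity)
          exact mul_le_mul_of_nonneg_left step4 hcc
      _ = 9 * C * (t⁻¹ * (Real.sqrt t)⁻¹) * Real.exp (-(u ^ 2 + s) / 2) := by rw [step5]
  have hpos : (0 : ℝ) < t ^ (-(3 / 2) : ℝ) * Real.exp (-(Hq aR t v) / 2) :=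
    mul_pos (Real.rpow_pos_of_pos ht0 _) (Real.exp_pos _)
  calc |psi0 aR t v - psi0 (e • bR) t v|
      ≤ 9 * C * (t ^ (-(3 / 2) : ℝ)) * Real.exp (-(Hq aR t v) / 2) := hfinal
    _ < (9 * C + 1) * t ^ (-(3 / 2) : ℝ) * Real.exp (-(Hq aR t v) / 2) := by
        have h9 : 9 * C < 9 * C + 1 := by linarith
        calc 9 * C * (t ^ (-(3 / 2) : ℝ)) * Real.exp (-(Hq aR t v) / 2)
            = 9 * C * (t ^ (-(3 / 2) : ℝ) * Real.exp (-(Hq aR t v) / 2)) := by ring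
          _ < (9 * C + 1) * (t ^ (-(3 / 2) : ℝ) * Real.exp (-(Hq aR t v) / 2)) :=
              mul_lt_mul_of_pos_right h9 hpos
          _ = (9 * C + 1) * t ^ (-(3 / 2) : ℝ) * Real.exp (-(Hq aR t v) / 2) := by ring
end
end

section
/- Let A, A' ∈ ℍ, let N be a positive integer, and let z, v ∈ ℂ be such that every factor below is nonzero. For λ', λ'' ∈ ℤ write u(λ',λ'') = Aλ' + A'λ'' + v, and consider the quotient R(λ',λ'') = (1 − e^{2πi(u(λ',λ'')−z)})^N (1 − e^{2πiN·u(λ',λ'')}) / [ (1 − e^{2πi·u(λ',λ'')})^N (1 − e^{2πiN(u(λ',λ'')−z)}) ]. Then the products Q₊₊ = ∏_{λ'≥1, λ''≥1} R(λ',λ'') and Q₋₋ = ∏_{λ'≤0, λ''≤0} R(λ',λ'') converge absolutely (in the sense that ∑ |R(λ',λ'') − 1| < ∞ over each index set), and Q₊₊ / Q₋₋ = [ Γ(z−v, A, A')^N / Γ(−v, A, A')^N ] · [ Γ(−Nv, NA, NA') / Γ(Nz−Nv, NA, NA') ]. -/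
noncomputable section

open Complex

lemma e2_ne_zero (w : ℂ) : e2 w ≠ 0 := Complex.exp_ne_zero _
lemma e2_pow (n : ℕ) (x : ℂ) : e2 x ^ n = e2 ((n : ℂ) * x) := by
  rw [e2, e2, ← Complex.exp_nat_mul]; ring_nf
lemma e2_zero : e2 0 = 1 := by simp [e2]
lemma abs_e2 (w : ℂ) : ‖(e2 w)‖ = Real.exp (-(2 * Real.pi * w.im)) := by
  rw [e2, Complex.norm_exp]; congr 1
  simp [Complex.mul_re, Complex.mul_im]
lemma abs_e2_lt_one {τ : ℂ} (hτ : 0 < τ.im) : ‖(e2 τ)‖ < 1 := by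
  rw [abs_e2]
  apply Real.exp_lt_one_iff.mpr
  nlinarith [Real.pi_pos]
lemma flip_e2 (x : ℂ) : 1 - e2 x = -e2 x * (1 - e2 (-x)) := by
  have h : e2 x * e2 (-x) = 1 := by rw [← e2_add]; simp [e2_zero]
  linear_combination -h

def gfun (τ σ w : ℂ) (p : ℕ × ℕ) : ℂ := 1 - e2 ((p.1 : ℂ) * τ + (p.2 : ℂ) * σ + w)

lemma summable_abs_e2 {τ σ : ℂ} (hτ : 0 < τ.im) (hσ : 0 < σ.im) (w : ℂ) :
    Summable (fun p : ℕ × ℕ => ‖(e2 ((p.1 : ℂ) * τ + (p.2 : ℂ) * σ + w))‖) := by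
  have h1 : ∀ p : ℕ × ℕ, ‖(e2 ((p.1 : ℂ) * τ + (p.2 : ℂ) * σ + w))‖
      = (‖(e2 τ)‖) ^ p.1 * ((‖(e2 σ)‖) ^ p.2 * ‖(e2 w)‖) := by
    intro p
    rw [e2_add, e2_add, norm_mul, norm_mul, ← e2_pow, ← e2_pow, norm_pow, norm_pow]
    ring
  exact Summable.congr (Summable.mul_of_nonneg
    (summable_geometric_of_lt_one (by positivity) (abs_e2_lt_one hτ))
    ((summable_geometric_of_lt_one (by positivity) (abs_e2_lt_one hσ)).mul_right _)
    (fun _ => by positivity) (fun _ => by positivity)) (fun p => (h1 p).symm)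

lemma eventually_abs_e2_lt {τ σ : ℂ} (hτ : 0 < τ.im) (hσ : 0 < σ.im) (w : ℂ) {c : ℝ}
    (hc : 0 < c) :
    ∀ᶠ p : ℕ × ℕ in Filter.cofinite,
      ‖(e2 ((p.1 : ℂ) * τ + (p.2 : ℂ) * σ + w))‖ < c := by
  have h := (summable_abs_e2 hτ hσ w).tendsto_cofinite_zero
  exact h.eventually (gt_mem_nhds hc)

lemma summable_log_gfun {τ σ : ℂ} (hτ : 0 < τ.im) (hσ : 0 < σ.im) (w : ℂ) :
    Summable (fun p : ℕ × ℕ => Complex.log (gfun τ σ w p)) := by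
  have hsum := (summable_abs_e2 hτ hσ w).mul_left (3/2 : ℝ)
  refine Summable.of_norm_bounded_eventually hsum ?_
  filter_upwards [eventually_abs_e2_lt hτ hσ w (by norm_num : (0:ℝ) < 1/2)] with p hp
  have h := Complex.norm_log_one_add_half_le_self
    (z := -(e2 ((p.1 : ℂ) * τ + (p.2 : ℂ) * σ + w))) (by simpa using hp.le)
  simpa [gfun, sub_eq_add_neg] using h

lemma gfun_prod {τ σ : ℂ} (hτ : 0 < τ.im) (hσ : 0 < σ.im) (w : ℂ)
    (h0 : ∀ p, gfun τ σ w p ≠ 0) :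
    Multipliable (gfun τ σ w) ∧ (∏' p, gfun τ σ w p) ≠ 0 := by
  have hs : ∀ _ : Unit, Summable (fun p : ℕ × ℕ => Complex.log (gfun τ σ w p)) :=
    fun _ => summable_log_gfun hτ hσ w
  refine ⟨Complex.multipliable_of_summable_log (hs ()), ?_⟩
  have h := Complex.cexp_tsum_eq_tprod (fun p => h0 p) (hs ())
  rw [← h]
  exact Complex.exp_ne_zero _

lemma HasProd.npow {ι : Type*} {f : ι → ℂ} {a : ℂ} (h : HasProd f a) (n : ℕ) :
    HasProd (fun i => f i ^ n) (a ^ n) := by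
  induction n with
  | zero => simpa using hasProd_one
  | succ n ih => simpa [pow_succ] using ih.mul h

def posEquiv : ℕ × ℕ ≃ {p : ℤ × ℤ // 1 ≤ p.1 ∧ 1 ≤ p.2} where
  toFun q := ⟨((q.1 : ℤ) + 1, (q.2 : ℤ) + 1), by constructor <;> simp <;> omega⟩
  invFun p := ((p.1.1 - 1).toNat, (p.1.2 - 1).toNat)
  left_inv q := by simp
  right_inv p := by
    rcases p with ⟨⟨a, b⟩, h1, h2⟩
    apply Subtype.ext
    simp only []
    rw [Prod.ext_iff]
    simp only at h1 h2
    constructor <;> simp <;> omega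

def negEquiv : ℕ × ℕ ≃ {p : ℤ × ℤ // p.1 ≤ 0 ∧ p.2 ≤ 0} where
  toFun q := ⟨(-(q.1 : ℤ), -(q.2 : ℤ)), by constructor <;> simp⟩
  invFun p := ((-p.1.1).toNat, (-p.1.2).toNat)
  left_inv q := by simp
  right_inv p := by
    rcases p with ⟨⟨a, b⟩, h1, h2⟩
    apply Subtype.ext
    simp only []
    rw [Prod.ext_iff]
    simp only at h1 h2
    constructor <;> simp <;> omega

lemma ratio_sub_one_bound (N : ℕ) (hN : 0 < N) {a b c d : ℂ}
    (ha : ‖a‖ ≤ 1/2) (hb : ‖b‖ ≤ 1/2)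
    (hc : ‖c‖ ≤ 1/2) (hd : ‖d‖ ≤ 1/2) :
    ‖((1 - a) ^ N * (1 - b) / ((1 - c) ^ N * (1 - d)) - 1)‖ ≤
      ((N : ℝ) + 1) * 3 ^ N * 2 *
        (‖a‖ + ‖b‖ + ‖c‖ + ‖d‖) := by
  have habs : ∀ x : ℂ, ‖x‖ ≤ 1/2 → 1/2 ≤ ‖(1 - x)‖ ∧
      ‖(1 - x)‖ ≤ 3/2 := by
    intro x hx
    have h1 := norm_sub_norm_le (1 : ℂ) x
    have h2 := norm_sub_le (1 : ℂ) x
    simp only [norm_one] at h1 h2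
    constructor <;> linarith
  obtain ⟨h1a, h2a⟩ := habs a ha
  obtain ⟨h1b, h2b⟩ := habs b hb
  obtain ⟨h1c, h2c⟩ := habs c hc
  obtain ⟨h1d, h2d⟩ := habs d hd
  have hDabs : ((1:ℝ)/2) ^ (N + 1) ≤ ‖((1 - c) ^ N * (1 - d))‖ := by
    rw [norm_mul, norm_pow, pow_succ]
    gcongr
  have hDpos : (0:ℝ) < ((1:ℝ)/2) ^ (N + 1) := by positivity
  have hD0 : (1 - c) ^ N * (1 - d) ≠ 0 := by
    intro h
    rw [h, norm_zero] at hDabs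
    linarith
  have key : (1 - a) ^ N * (1 - b) / ((1 - c) ^ N * (1 - d)) - 1 =
      ((1 - a) ^ N * (1 - b) - (1 - c) ^ N * (1 - d)) / ((1 - c) ^ N * (1 - d)) := by
    rw [sub_div, div_self hD0]
  -- bound on abs ((1-a)^N - (1-c)^N)
  have hpow : ‖((1 - a) ^ N - (1 - c) ^ N)‖ ≤
      (N : ℝ) * (3/2) ^ (N - 1) * (‖a‖ + ‖c‖) := by
    rw [← geom_sum₂_mul (1 - a) (1 - c) N, norm_mul]
    have hsum : ‖(∑ i ∈ Finset.range N, (1 - a) ^ i * (1 - c) ^ (N - 1 - i))‖ ≤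
        (N : ℝ) * (3/2) ^ (N - 1) := by
      refine le_trans (norm_sum_le _ _) ?_
      have hterm : ∀ i ∈ Finset.range N,
          ‖((1 - a) ^ i * (1 - c) ^ (N - 1 - i))‖ ≤ ((3:ℝ)/2) ^ (N - 1) := by
        intro i hi
        rw [norm_mul, norm_pow, norm_pow]
        calc ‖(1 - a)‖ ^ i * ‖(1 - c)‖ ^ (N - 1 - i)
            ≤ ((3:ℝ)/2) ^ i * ((3:ℝ)/2) ^ (N - 1 - i) := by
              gcongr <;> first | positivity | assumption
          _ = ((3:ℝ)/2) ^ (N - 1) := by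
              rw [← pow_add]
              congr 1
              simp only [Finset.mem_range] at hi
              omega
      calc (∑ i ∈ Finset.range N, ‖((1 - a) ^ i * (1 - c) ^ (N - 1 - i))‖)
          ≤ ∑ _i ∈ Finset.range N, ((3:ℝ)/2) ^ (N - 1) := Finset.sum_le_sum hterm
        _ = (N : ℝ) * (3/2) ^ (N - 1) := by
            rw [Finset.sum_const, Finset.card_range, nsmul_eq_mul]
    have hdiff : ‖((1 - a) - (1 - c))‖ ≤ ‖a‖ + ‖c‖ := by
      have h : (1 - a) - (1 - c) = c - a := by ring
      rw [h]
      have := norm_sub_le c a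
      linarith
    calc ‖(∑ i ∈ Finset.range N, (1 - a) ^ i * (1 - c) ^ (N - 1 - i))‖ *
          ‖((1 - a) - (1 - c))‖
        ≤ ((N : ℝ) * (3/2) ^ (N - 1)) * (‖a‖ + ‖c‖) :=
          mul_le_mul hsum hdiff (norm_nonneg _) (by positivity)
      _ = (N : ℝ) * (3/2) ^ (N - 1) * (‖a‖ + ‖c‖) := by ring
  have e1 : ‖((1 - b) - (1 - d))‖ ≤ ‖b‖ + ‖d‖ := by
    have h : (1 - b) - (1 - d) = d - b := by ring
    rw [h]
    have := norm_sub_le d b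
    linarith
  have e2 : ‖(1 - a)‖ ^ N ≤ ((3:ℝ)/2) ^ N :=
    pow_le_pow_left₀ (norm_nonneg _) h2a N
  have hp : ((3:ℝ)/2) ^ (N - 1) * (3/2) = (3/2) ^ N := by
    rw [← pow_succ]
    congr 1
    omega
  set S := ‖a‖ + ‖b‖ + ‖c‖ + ‖d‖ with hS
  have hnum : ‖((1 - a) ^ N * (1 - b) - (1 - c) ^ N * (1 - d))‖ ≤
      ((3:ℝ)/2) ^ N * ((‖b‖ + ‖d‖) +
        (N : ℝ) * (‖a‖ + ‖c‖)) := by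
    have hsplit : (1 - a) ^ N * (1 - b) - (1 - c) ^ N * (1 - d) =
        (1 - a) ^ N * ((1 - b) - (1 - d)) + (1 - d) * ((1 - a) ^ N - (1 - c) ^ N) := by ring
    rw [hsplit]
    refine le_trans (norm_add_le _ _) ?_
    rw [norm_mul, norm_mul, norm_pow]
    have t1 : ‖(1 - a)‖ ^ N * ‖((1 - b) - (1 - d))‖ ≤
        ((3:ℝ)/2) ^ N * (‖b‖ + ‖d‖) :=
      mul_le_mul e2 e1 (norm_nonneg _) (by positivity)
    have t2 : ‖(1 - d)‖ * ‖((1 - a) ^ N - (1 - c) ^ N)‖ ≤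
        (3/2 : ℝ) * ((N : ℝ) * (3/2) ^ (N - 1) * (‖a‖ + ‖c‖)) :=
      mul_le_mul h2d hpow (norm_nonneg _) (by norm_num)
    calc ‖(1 - a)‖ ^ N * ‖((1 - b) - (1 - d))‖ +
          ‖(1 - d)‖ * ‖((1 - a) ^ N - (1 - c) ^ N)‖
        ≤ ((3:ℝ)/2) ^ N * (‖b‖ + ‖d‖) +
          (3/2 : ℝ) * ((N : ℝ) * (3/2) ^ (N - 1) * (‖a‖ + ‖c‖)) :=
          add_le_add t1 t2
      _ = ((3:ℝ)/2) ^ N * ((‖b‖ + ‖d‖) +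
          (N : ℝ) * (‖a‖ + ‖c‖)) := by rw [← hp]; ring
  have hXS : (‖b‖ + ‖d‖) + (N : ℝ) * (‖a‖ + ‖c‖) ≤
      ((N : ℝ) + 1) * S := by
    have h1 := norm_nonneg a
    have h2 := norm_nonneg b
    have h3 := norm_nonneg c
    have h4 := norm_nonneg d
    have h5 : (0:ℝ) ≤ (N : ℝ) := Nat.cast_nonneg N
    nlinarith
  have hnum2 : ‖((1 - a) ^ N * (1 - b) - (1 - c) ^ N * (1 - d))‖ ≤
      ((3:ℝ)/2) ^ N * (((N : ℝ) + 1) * S) :=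
    le_trans hnum (mul_le_mul_of_nonneg_left hXS (by positivity))
  rw [key, norm_div]
  have hq : ((3:ℝ)/2) ^ N * 2 ^ (N + 1) = 3 ^ N * 2 := by
    rw [pow_succ, ← mul_assoc, ← mul_pow]
    norm_num
  have hSnn : (0:ℝ) ≤ S := by positivity
  calc ‖((1 - a) ^ N * (1 - b) - (1 - c) ^ N * (1 - d))‖ /
        ‖((1 - c) ^ N * (1 - d))‖
      ≤ (((3:ℝ)/2) ^ N * (((N : ℝ) + 1) * S)) / (((1:ℝ)/2) ^ (N + 1)) :=
        div_le_div₀ (by positivity) hnum2 hDpos hDabs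
    _ = (((3:ℝ)/2) ^ N * 2 ^ (N + 1)) * (((N : ℝ) + 1) * S) := by
        rw [div_eq_mul_inv, one_div, inv_pow, inv_inv]
        ring
    _ = ((N : ℝ) + 1) * 3 ^ N * 2 * S := by rw [hq]; ring

/-- The elliptic gamma function
`Γ(z,τ,σ) = ∏_{j,k ≥ 0} (1 − e^{2πi((j+1)τ+(k+1)σ−z)}) / (1 − e^{2πi(jτ+kσ+z)})`. -/
def ellGamma (z τ σ : ℂ) : ℂ :=
  (∏' p : ℕ × ℕ, (1 - e2 (((p.1 : ℂ) + 1) * τ + ((p.2 : ℂ) + 1) * σ - z))) /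
    (∏' p : ℕ × ℕ, (1 - e2 ((p.1 : ℂ) * τ + (p.2 : ℂ) * σ + z)))

/-- Eisenstein's smoothed factor
`R(λ',λ'') = (1−e(u−z))^N (1−e(Nu)) / ((1−e(u))^N (1−e(N(u−z))))` with
`u = Aλ' + A'λ'' + v`. -/
def eisR (A A' : ℂ) (N : ℕ) (z v : ℂ) (p : ℤ × ℤ) : ℂ :=
  (1 - e2 ((A * p.1 + A' * p.2 + v) - z)) ^ N * (1 - e2 ((N : ℂ) * (A * p.1 + A' * p.2 + v))) /
    ((1 - e2 (A * p.1 + A' * p.2 + v)) ^ N *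
      (1 - e2 ((N : ℂ) * ((A * p.1 + A' * p.2 + v) - z))))

lemma quot_congr {a a' b b' c c' d d' : ℂ} (N : ℕ) (h1 : a = a') (h2 : b = b')
    (h3 : c = c') (h4 : d = d') :
    (1 - e2 a) ^ N * (1 - e2 b) / ((1 - e2 c) ^ N * (1 - e2 d)) =
      (1 - e2 a') ^ N * (1 - e2 b') / ((1 - e2 c') ^ N * (1 - e2 d')) := by
  rw [h1, h2, h3, h4]

lemma eisR_pos (A A' : ℂ) (N : ℕ) (z v : ℂ) (q : ℕ × ℕ) :
    eisR A A' N z v ((q.1 : ℤ) + 1, (q.2 : ℤ) + 1) =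
      gfun A A' (A + A' - (z - v)) q ^ N *
        gfun ((N : ℂ) * A) ((N : ℂ) * A') ((N : ℂ) * A + (N : ℂ) * A' - (-((N : ℂ) * v))) q /
      (gfun A A' (A + A' - (-v)) q ^ N *
        gfun ((N : ℂ) * A) ((N : ℂ) * A') ((N : ℂ) * A + (N : ℂ) * A' -
          ((N : ℂ) * z - (N : ℂ) * v)) q) := by
  rw [eisR]
  simp only [gfun]
  exact quot_congr N (by push_cast; ring) (by push_cast; ring) (by push_cast; ring)
    (by push_cast; ring)

lemma eisR_flip (A A' : ℂ) (N : ℕ) (z v : ℂ) (p : ℤ × ℤ) :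
    eisR A A' N z v p =
      (1 - e2 (z - (A * p.1 + A' * p.2 + v))) ^ N *
        (1 - e2 (-((N : ℂ) * (A * p.1 + A' * p.2 + v)))) /
      ((1 - e2 (-(A * p.1 + A' * p.2 + v))) ^ N *
        (1 - e2 ((N : ℂ) * (z - (A * p.1 + A' * p.2 + v))))) := by
  set u := A * p.1 + A' * p.2 + v with hu
  rw [eisR]
  rw [flip_e2 (u - z), flip_e2 ((N : ℂ) * u), flip_e2 u, flip_e2 ((N : ℂ) * (u - z)),
    mul_pow, mul_pow]
  rw [show -(u - z) = z - u from by ring, show -((N : ℂ) * (u - z)) = (N : ℂ) * (z - u) from by ring]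
  have hX : (-e2 u) ^ N * (-e2 ((N : ℂ) * (u - z))) ≠ 0 :=
    mul_ne_zero (pow_ne_zero _ (neg_ne_zero.mpr (e2_ne_zero _)))
      (neg_ne_zero.mpr (e2_ne_zero _))
  have hC : (-e2 (u - z)) ^ N * (-e2 ((N : ℂ) * u)) = (-e2 u) ^ N * (-e2 ((N : ℂ) * (u - z))) := by
    have h1 : (-e2 (u - z)) ^ N = (-1 : ℂ) ^ N * e2 ((N : ℂ) * (u - z)) := by
      rw [neg_pow, e2_pow]
    have h2 : (-e2 u) ^ N = (-1 : ℂ) ^ N * e2 ((N : ℂ) * u) := by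
      rw [neg_pow, e2_pow]
    rw [h1, h2]
    ring
  calc (-e2 (u - z)) ^ N * (1 - e2 (z - u)) ^ N * (-e2 ((N : ℂ) * u) * (1 - e2 (-((N : ℂ) * u)))) /
        ((-e2 u) ^ N * (1 - e2 (-u)) ^ N * (-e2 ((N : ℂ) * (u - z)) * (1 - e2 ((N : ℂ) * (z - u)))))
      = ((-e2 (u - z)) ^ N * (-e2 ((N : ℂ) * u))) *
          ((1 - e2 (z - u)) ^ N * (1 - e2 (-((N : ℂ) * u)))) /
        (((-e2 u) ^ N * (-e2 ((N : ℂ) * (u - z)))) *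
          ((1 - e2 (-u)) ^ N * (1 - e2 ((N : ℂ) * (z - u))))) := by ring
    _ = ((-e2 u) ^ N * (-e2 ((N : ℂ) * (u - z)))) *
          ((1 - e2 (z - u)) ^ N * (1 - e2 (-((N : ℂ) * u)))) /
        (((-e2 u) ^ N * (-e2 ((N : ℂ) * (u - z)))) *
          ((1 - e2 (-u)) ^ N * (1 - e2 ((N : ℂ) * (z - u))))) := by rw [hC]
    _ = (1 - e2 (z - u)) ^ N * (1 - e2 (-((N : ℂ) * u))) /
        ((1 - e2 (-u)) ^ N * (1 - e2 ((N : ℂ) * (z - u)))) := mul_div_mul_left _ _ hX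

lemma eisR_negq (A A' : ℂ) (N : ℕ) (z v : ℂ) (q : ℕ × ℕ) :
    eisR A A' N z v (-(q.1 : ℤ), -(q.2 : ℤ)) =
      gfun A A' (z - v) q ^ N * gfun ((N : ℂ) * A) ((N : ℂ) * A') (-((N : ℂ) * v)) q /
      (gfun A A' (-v) q ^ N *
        gfun ((N : ℂ) * A) ((N : ℂ) * A') ((N : ℂ) * z - (N : ℂ) * v) q) := by
  rw [eisR_flip]
  simp only [gfun]
  exact quot_congr N (by push_cast; ring) (by push_cast; ring) (by push_cast; ring)
    (by push_cast; ring)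

/-- Eisenstein's quotient of quotients: the products `Q₊₊` and `Q₋₋` of `R(λ',λ'')` over
`λ',λ'' ≥ 1` and over `λ',λ'' ≤ 0` converge absolutely, and
`Q₊₊/Q₋₋ = [Γ(z−v,A,A')^N/Γ(−v,A,A')^N]·[Γ(−Nv,NA,NA')/Γ(Nz−Nv,NA,NA')]`. -/
theorem eisenstein_quotient_of_quotients (A A' : ℂ) (hA : 0 < A.im) (hA' : 0 < A'.im)
    (N : ℕ) (hN : 0 < N) (z v : ℂ)
    (hfac : ∀ p : ℤ × ℤ, (1 ≤ p.1 ∧ 1 ≤ p.2) ∨ (p.1 ≤ 0 ∧ p.2 ≤ 0) →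
      (1 - e2 ((A * p.1 + A' * p.2 + v) - z)) ≠ 0 ∧
      (1 - e2 ((N : ℂ) * (A * p.1 + A' * p.2 + v))) ≠ 0 ∧
      (1 - e2 (A * p.1 + A' * p.2 + v)) ≠ 0 ∧
      (1 - e2 ((N : ℂ) * ((A * p.1 + A' * p.2 + v) - z))) ≠ 0)
    (hΓ : ∀ j k : ℕ, ∀ w ∈ ({z - v, -v, (N : ℂ) * z - (N : ℂ) * v, -((N : ℂ) * v)} : Set ℂ),
      ∀ T ∈ ({(A, A'), ((N : ℂ) * A, (N : ℂ) * A')} : Set (ℂ × ℂ)),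
      (1 - e2 ((j : ℂ) * T.1 + (k : ℂ) * T.2 + w)) ≠ 0 ∧
      (1 - e2 (((j : ℂ) + 1) * T.1 + ((k : ℂ) + 1) * T.2 - w)) ≠ 0) :
    Summable (fun p : {p : ℤ × ℤ // 1 ≤ p.1 ∧ 1 ≤ p.2} =>
      ‖eisR A A' N z v p.1 - 1‖) ∧
    Summable (fun p : {p : ℤ × ℤ // p.1 ≤ 0 ∧ p.2 ≤ 0} =>
      ‖eisR A A' N z v p.1 - 1‖) ∧
    (∏' p : {p : ℤ × ℤ // 1 ≤ p.1 ∧ 1 ≤ p.2}, eisR A A' N z v p.1) /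
        (∏' p : {p : ℤ × ℤ // p.1 ≤ 0 ∧ p.2 ≤ 0}, eisR A A' N z v p.1) =
      (ellGamma (z - v) A A' ^ N / ellGamma (-v) A A' ^ N) *
        (ellGamma (-((N : ℂ) * v)) ((N : ℂ) * A) ((N : ℂ) * A') /
          ellGamma ((N : ℂ) * z - (N : ℂ) * v) ((N : ℂ) * A) ((N : ℂ) * A')) := by
  have hNA : 0 < ((N : ℂ) * A).im := by
    have h : ((N : ℂ) * A).im = (N : ℝ) * A.im := by simp [Complex.mul_im]
    rw [h]
    have : (0 : ℝ) < N := by exact_mod_cast hN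
    positivity
  have hNA' : 0 < ((N : ℂ) * A').im := by
    have h : ((N : ℂ) * A').im = (N : ℝ) * A'.im := by simp [Complex.mul_im]
    rw [h]
    have : (0 : ℝ) < N := by exact_mod_cast hN
    positivity
  -- nonvanishing of the eight factor families
  have hg1 : ∀ q : ℕ × ℕ, gfun A A' (A + A' - (z - v)) q ≠ 0 := by
    intro q
    have h := (hΓ q.1 q.2 (z - v) (by simp) (A, A') (by simp)).2
    simp only [gfun]
    rw [show (q.1 : ℂ) * A + (q.2 : ℂ) * A' + (A + A' - (z - v)) =
      ((q.1 : ℂ) + 1) * A + ((q.2 : ℂ) + 1) * A' - (z - v) from by ring]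
    simpa using h
  have hg2 : ∀ q : ℕ × ℕ, gfun ((N : ℂ) * A) ((N : ℂ) * A')
      ((N : ℂ) * A + (N : ℂ) * A' - (-((N : ℂ) * v))) q ≠ 0 := by
    intro q
    have h := (hΓ q.1 q.2 (-((N : ℂ) * v)) (by simp) ((N : ℂ) * A, (N : ℂ) * A') (by simp)).2
    simp only [gfun]
    rw [show (q.1 : ℂ) * ((N : ℂ) * A) + (q.2 : ℂ) * ((N : ℂ) * A') +
        ((N : ℂ) * A + (N : ℂ) * A' - (-((N : ℂ) * v))) =
      ((q.1 : ℂ) + 1) * ((N : ℂ) * A) + ((q.2 : ℂ) + 1) * ((N : ℂ) * A') - (-((N : ℂ) * v))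
      from by ring]
    simpa using h
  have hg3 : ∀ q : ℕ × ℕ, gfun A A' (A + A' - (-v)) q ≠ 0 := by
    intro q
    have h := (hΓ q.1 q.2 (-v) (by simp) (A, A') (by simp)).2
    simp only [gfun]
    rw [show (q.1 : ℂ) * A + (q.2 : ℂ) * A' + (A + A' - (-v)) =
      ((q.1 : ℂ) + 1) * A + ((q.2 : ℂ) + 1) * A' - (-v) from by ring]
    simpa using h
  have hg4 : ∀ q : ℕ × ℕ, gfun ((N : ℂ) * A) ((N : ℂ) * A')
      ((N : ℂ) * A + (N : ℂ) * A' - ((N : ℂ) * z - (N : ℂ) * v)) q ≠ 0 := by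
    intro q
    have h := (hΓ q.1 q.2 ((N : ℂ) * z - (N : ℂ) * v) (by simp)
      ((N : ℂ) * A, (N : ℂ) * A') (by simp)).2
    simp only [gfun]
    rw [show (q.1 : ℂ) * ((N : ℂ) * A) + (q.2 : ℂ) * ((N : ℂ) * A') +
        ((N : ℂ) * A + (N : ℂ) * A' - ((N : ℂ) * z - (N : ℂ) * v)) =
      ((q.1 : ℂ) + 1) * ((N : ℂ) * A) + ((q.2 : ℂ) + 1) * ((N : ℂ) * A') -
        ((N : ℂ) * z - (N : ℂ) * v) from by ring]
    simpa using h
  have hg5 : ∀ q : ℕ × ℕ, gfun A A' (z - v) q ≠ 0 := by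
    intro q
    have h := (hΓ q.1 q.2 (z - v) (by simp) (A, A') (by simp)).1
    simp only [gfun]
    simpa using h
  have hg6 : ∀ q : ℕ × ℕ, gfun ((N : ℂ) * A) ((N : ℂ) * A') (-((N : ℂ) * v)) q ≠ 0 := by
    intro q
    have h := (hΓ q.1 q.2 (-((N : ℂ) * v)) (by simp) ((N : ℂ) * A, (N : ℂ) * A') (by simp)).1
    simp only [gfun]
    simpa using h
  have hg7 : ∀ q : ℕ × ℕ, gfun A A' (-v) q ≠ 0 := by
    intro q
    have h := (hΓ q.1 q.2 (-v) (by simp) (A, A') (by simp)).1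
    simp only [gfun]
    simpa using h
  have hg8 : ∀ q : ℕ × ℕ, gfun ((N : ℂ) * A) ((N : ℂ) * A') ((N : ℂ) * z - (N : ℂ) * v) q ≠ 0 := by
    intro q
    have h := (hΓ q.1 q.2 ((N : ℂ) * z - (N : ℂ) * v) (by simp)
      ((N : ℂ) * A, (N : ℂ) * A') (by simp)).1
    simp only [gfun]
    simpa using h
  obtain ⟨m1, ne1⟩ := gfun_prod hA hA' _ hg1
  obtain ⟨m2, ne2⟩ := gfun_prod hNA hNA' _ hg2
  obtain ⟨m3, ne3⟩ := gfun_prod hA hA' _ hg3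
  obtain ⟨m4, ne4⟩ := gfun_prod hNA hNA' _ hg4
  obtain ⟨m5, ne5⟩ := gfun_prod hA hA' _ hg5
  obtain ⟨m6, ne6⟩ := gfun_prod hNA hNA' _ hg6
  obtain ⟨m7, ne7⟩ := gfun_prod hA hA' _ hg7
  obtain ⟨m8, ne8⟩ := gfun_prod hNA hNA' _ hg8
  -- the two infinite products
  have hPpos : HasProd (fun q : ℕ × ℕ => eisR A A' N z v (posEquiv q).1)
      ((∏' q : ℕ × ℕ, gfun A A' (A + A' - (z - v)) q) ^ N *
        (∏' q : ℕ × ℕ, gfun ((N : ℂ) * A) ((N : ℂ) * A')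
          ((N : ℂ) * A + (N : ℂ) * A' - (-((N : ℂ) * v))) q) *
        ((∏' q : ℕ × ℕ, gfun A A' (A + A' - (-v)) q) ^ N *
          (∏' q : ℕ × ℕ, gfun ((N : ℂ) * A) ((N : ℂ) * A')
            ((N : ℂ) * A + (N : ℂ) * A' - ((N : ℂ) * z - (N : ℂ) * v)) q))⁻¹) := by
    have h := ((m1.hasProd.npow N).mul m2.hasProd).mul
      (((m3.hasProd.npow N).mul m4.hasProd).inv₀ (mul_ne_zero (pow_ne_zero N ne3) ne4))
    refine HasProd.congr_fun h ?_
    intro x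
    rw [← div_eq_mul_inv]
    exact eisR_pos A A' N z v x
  have hPneg : HasProd (fun q : ℕ × ℕ => eisR A A' N z v (negEquiv q).1)
      ((∏' q : ℕ × ℕ, gfun A A' (z - v) q) ^ N *
        (∏' q : ℕ × ℕ, gfun ((N : ℂ) * A) ((N : ℂ) * A') (-((N : ℂ) * v)) q) *
        ((∏' q : ℕ × ℕ, gfun A A' (-v) q) ^ N *
          (∏' q : ℕ × ℕ, gfun ((N : ℂ) * A) ((N : ℂ) * A')
            ((N : ℂ) * z - (N : ℂ) * v) q))⁻¹) := by
    have h := ((m5.hasProd.npow N).mul m6.hasProd).mul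
      (((m7.hasProd.npow N).mul m8.hasProd).inv₀ (mul_ne_zero (pow_ne_zero N ne7) ne8))
    refine HasProd.congr_fun h ?_
    intro x
    rw [← div_eq_mul_inv]
    exact eisR_negq A A' N z v x
  have hQpos : (∏' p : {p : ℤ × ℤ // 1 ≤ p.1 ∧ 1 ≤ p.2}, eisR A A' N z v p.1) =
      (∏' q : ℕ × ℕ, gfun A A' (A + A' - (z - v)) q) ^ N *
        (∏' q : ℕ × ℕ, gfun ((N : ℂ) * A) ((N : ℂ) * A')
          ((N : ℂ) * A + (N : ℂ) * A' - (-((N : ℂ) * v))) q) *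
        ((∏' q : ℕ × ℕ, gfun A A' (A + A' - (-v)) q) ^ N *
          (∏' q : ℕ × ℕ, gfun ((N : ℂ) * A) ((N : ℂ) * A')
            ((N : ℂ) * A + (N : ℂ) * A' - ((N : ℂ) * z - (N : ℂ) * v)) q))⁻¹ := by
    rw [← Equiv.tprod_eq posEquiv (fun p : {p : ℤ × ℤ // 1 ≤ p.1 ∧ 1 ≤ p.2} =>
      eisR A A' N z v p.1)]
    exact hPpos.tprod_eq
  have hQneg : (∏' p : {p : ℤ × ℤ // p.1 ≤ 0 ∧ p.2 ≤ 0}, eisR A A' N z v p.1) =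
      (∏' q : ℕ × ℕ, gfun A A' (z - v) q) ^ N *
        (∏' q : ℕ × ℕ, gfun ((N : ℂ) * A) ((N : ℂ) * A') (-((N : ℂ) * v)) q) *
        ((∏' q : ℕ × ℕ, gfun A A' (-v) q) ^ N *
          (∏' q : ℕ × ℕ, gfun ((N : ℂ) * A) ((N : ℂ) * A')
            ((N : ℂ) * z - (N : ℂ) * v) q))⁻¹ := by
    rw [← Equiv.tprod_eq negEquiv (fun p : {p : ℤ × ℤ // p.1 ≤ 0 ∧ p.2 ≤ 0} =>
      eisR A A' N z v p.1)]
    exact hPneg.tprod_eq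
  have hG1 : ellGamma (z - v) A A' =
      (∏' q : ℕ × ℕ, gfun A A' (A + A' - (z - v)) q) / (∏' q : ℕ × ℕ, gfun A A' (z - v) q) := by
    rw [ellGamma]
    congr 1
    · refine tprod_congr fun p => ?_
      simp only [gfun]
      rw [show ((p.1 : ℂ) + 1) * A + ((p.2 : ℂ) + 1) * A' - (z - v) =
        (p.1 : ℂ) * A + (p.2 : ℂ) * A' + (A + A' - (z - v)) from by ring]
  have hG2 : ellGamma (-v) A A' =
      (∏' q : ℕ × ℕ, gfun A A' (A + A' - (-v)) q) / (∏' q : ℕ × ℕ, gfun A A' (-v) q) := by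
    rw [ellGamma]
    congr 1
    · refine tprod_congr fun p => ?_
      simp only [gfun]
      rw [show ((p.1 : ℂ) + 1) * A + ((p.2 : ℂ) + 1) * A' - (-v) =
        (p.1 : ℂ) * A + (p.2 : ℂ) * A' + (A + A' - (-v)) from by ring]
  have hG3 : ellGamma (-((N : ℂ) * v)) ((N : ℂ) * A) ((N : ℂ) * A') =
      (∏' q : ℕ × ℕ, gfun ((N : ℂ) * A) ((N : ℂ) * A')
        ((N : ℂ) * A + (N : ℂ) * A' - (-((N : ℂ) * v))) q) /
      (∏' q : ℕ × ℕ, gfun ((N : ℂ) * A) ((N : ℂ) * A') (-((N : ℂ) * v)) q) := by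
    rw [ellGamma]
    congr 1
    · refine tprod_congr fun p => ?_
      simp only [gfun]
      rw [show ((p.1 : ℂ) + 1) * ((N : ℂ) * A) + ((p.2 : ℂ) + 1) * ((N : ℂ) * A') -
          (-((N : ℂ) * v)) =
        (p.1 : ℂ) * ((N : ℂ) * A) + (p.2 : ℂ) * ((N : ℂ) * A') +
          ((N : ℂ) * A + (N : ℂ) * A' - (-((N : ℂ) * v))) from by ring]
  have hG4 : ellGamma ((N : ℂ) * z - (N : ℂ) * v) ((N : ℂ) * A) ((N : ℂ) * A') =
      (∏' q : ℕ × ℕ, gfun ((N : ℂ) * A) ((N : ℂ) * A')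
        ((N : ℂ) * A + (N : ℂ) * A' - ((N : ℂ) * z - (N : ℂ) * v)) q) /
      (∏' q : ℕ × ℕ, gfun ((N : ℂ) * A) ((N : ℂ) * A') ((N : ℂ) * z - (N : ℂ) * v) q) := by
    rw [ellGamma]
    congr 1
    · refine tprod_congr fun p => ?_
      simp only [gfun]
      rw [show ((p.1 : ℂ) + 1) * ((N : ℂ) * A) + ((p.2 : ℂ) + 1) * ((N : ℂ) * A') -
          ((N : ℂ) * z - (N : ℂ) * v) =
        (p.1 : ℂ) * ((N : ℂ) * A) + (p.2 : ℂ) * ((N : ℂ) * A') +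
          ((N : ℂ) * A + (N : ℂ) * A' - ((N : ℂ) * z - (N : ℂ) * v)) from by ring]
  refine ⟨?_, ?_, ?_⟩
  · have hs1 := summable_abs_e2 hA hA' (A + A' - (z - v))
    have hs2 := summable_abs_e2 hNA hNA' ((N : ℂ) * A + (N : ℂ) * A' - (-((N : ℂ) * v)))
    have hs3 := summable_abs_e2 hA hA' (A + A' - (-v))
    have hs4 := summable_abs_e2 hNA hNA' ((N : ℂ) * A + (N : ℂ) * A' -
      ((N : ℂ) * z - (N : ℂ) * v))
    have hg := (((hs1.add hs2).add hs3).add hs4).mul_left (((N : ℝ) + 1) * 3 ^ N * 2)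
    have hsum : Summable (fun q : ℕ × ℕ =>
        ‖(eisR A A' N z v ((q.1 : ℤ) + 1, (q.2 : ℤ) + 1) - 1)‖) := by
      refine Summable.of_norm_bounded_eventually hg ?_
      have e1 := eventually_abs_e2_lt hA hA' (A + A' - (z - v)) (one_half_pos)
      have e2' := eventually_abs_e2_lt hNA hNA'
        ((N : ℂ) * A + (N : ℂ) * A' - (-((N : ℂ) * v))) (one_half_pos)
      have e3' := eventually_abs_e2_lt hA hA' (A + A' - (-v)) (one_half_pos)
      have e4' := eventually_abs_e2_lt hNA hNA'
        ((N : ℂ) * A + (N : ℂ) * A' - ((N : ℂ) * z - (N : ℂ) * v)) (one_half_pos)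
      filter_upwards [e1, e2', e3', e4'] with q h1 h2 h3 h4
      rw [Real.norm_eq_abs, _root_.abs_of_nonneg (norm_nonneg _), eisR_pos]
      exact ratio_sub_one_bound N hN h1.le h2.le h3.le h4.le
    exact posEquiv.summable_iff.mp hsum
  · have hs5 := summable_abs_e2 hA hA' (z - v)
    have hs6 := summable_abs_e2 hNA hNA' (-((N : ℂ) * v))
    have hs7 := summable_abs_e2 hA hA' (-v)
    have hs8 := summable_abs_e2 hNA hNA' ((N : ℂ) * z - (N : ℂ) * v)
    have hg := (((hs5.add hs6).add hs7).add hs8).mul_left (((N : ℝ) + 1) * 3 ^ N * 2)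
    have hsum : Summable (fun q : ℕ × ℕ =>
        ‖(eisR A A' N z v (-(q.1 : ℤ), -(q.2 : ℤ)) - 1)‖) := by
      refine Summable.of_norm_bounded_eventually hg ?_
      have e1 := eventually_abs_e2_lt hA hA' (z - v) (one_half_pos)
      have e2' := eventually_abs_e2_lt hNA hNA' (-((N : ℂ) * v)) (one_half_pos)
      have e3' := eventually_abs_e2_lt hA hA' (-v) (one_half_pos)
      have e4' := eventually_abs_e2_lt hNA hNA' ((N : ℂ) * z - (N : ℂ) * v) (one_half_pos)
      filter_upwards [e1, e2', e3', e4'] with q h1 h2 h3 h4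
      rw [Real.norm_eq_abs, _root_.abs_of_nonneg (norm_nonneg _), eisR_negq]
      exact ratio_sub_one_bound N hN h1.le h2.le h3.le h4.le
    exact negEquiv.summable_iff.mp hsum
  · rw [hQpos, hQneg, hG1, hG2, hG3, hG4]
    generalize (∏' q : ℕ × ℕ, gfun A A' (A + A' - (z - v)) q) = P1 at ne1 ⊢
    generalize (∏' q : ℕ × ℕ, gfun ((N : ℂ) * A) ((N : ℂ) * A') ((N : ℂ) * A + (N : ℂ) * A' - (-((N : ℂ) * v))) q) = P2 at ne2 ⊢
    generalize (∏' q : ℕ × ℕ, gfun A A' (A + A' - (-v)) q) = P3 at ne3 ⊢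
    generalize (∏' q : ℕ × ℕ, gfun ((N : ℂ) * A) ((N : ℂ) * A') ((N : ℂ) * A + (N : ℂ) * A' - ((N : ℂ) * z - (N : ℂ) * v)) q) = P4 at ne4 ⊢
    generalize (∏' q : ℕ × ℕ, gfun A A' (z - v) q) = P5 at ne5 ⊢
    generalize (∏' q : ℕ × ℕ, gfun ((N : ℂ) * A) ((N : ℂ) * A') (-((N : ℂ) * v)) q) = P6 at ne6 ⊢
    generalize (∏' q : ℕ × ℕ, gfun A A' (-v) q) = P7 at ne7 ⊢
    generalize (∏' q : ℕ × ℕ, gfun ((N : ℂ) * A) ((N : ℂ) * A') ((N : ℂ) * z - (N : ℂ) * v) q) = P8 at ne8 ⊢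
    field_simp
    have h7 := mul_inv_cancel₀ (pow_ne_zero N ne7)
    have h5 := mul_inv_cancel₀ (pow_ne_zero N ne5)
    rw [div_pow, div_pow]
    linear_combination (P1 ^ N * P3 ^ N) * (h7 - h5)
end
end
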